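/- arXiv:1906.00796 — 10 statements merged into one kernel-verified Lean document; each statement's English description precedes it below -/
import Mathlib

section
/- Let A be a finite alphabet and let F : A^ℕ → A^ℕ be a one-sided cellular automaton that is nilpotent with quiescent state q. Then F is uniformly nilpotent: there exists n ∈ ℕ such that F^n(c) = q^ω for all c ∈ A^ℕ. -/
/-- The one-sided shift map on configurations `ℕ → A`. -/
def shiftN {A : Type*} (c : ℕ → A) : ℕ → A := fun i => c (i + 1)

theorem shiftN_iterate {A : Type*} (c : ℕ → A) (L i : ℕ) :
    (shiftN^[L] c) i = c (i + L) := by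
  induction L generalizing c i with
  | zero => rfl
  | succ L ih =>
    rw [Function.iterate_succ_apply, ih]
    simp [shiftN, Nat.add_assoc, Nat.add_comm 1 L]

/-- **Uniform nilpotency.** Let `A` be a finite alphabet and `F : A^ℕ → A^ℕ` a one-sided
cellular automaton (a continuous shift-commuting map) that is nilpotent with quiescent
state `q`.  Then `F` is uniformly nilpotent: there is `n` with `F^n(c) = q^ω` for all `c`. -/
theorem uniformly_nilpotent {A : Type*} [Fintype A] [TopologicalSpace A] [DiscreteTopology A]
    (F : (ℕ → A) → (ℕ → A))
    (hFcont : Continuous F)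
    (hFshift : ∀ c, F (shiftN c) = shiftN (F c))
    (q : A)
    (hq : F (fun _ => q) = fun _ => q)
    (hnil : ∀ c, ∃ n : ℕ, F^[n] c = fun _ => q) :
    ∃ n : ℕ, ∀ c, F^[n] c = fun _ => q := by
  -- F^[n] commutes with shiftN
  have hiter : ∀ n c, F^[n] (shiftN c) = shiftN (F^[n] c) := by
    intro n
    induction n with
    | zero => intro c; rfl
    | succ n ih =>
      intro c
      rw [Function.iterate_succ_apply, hFshift, ih, Function.iterate_succ_apply]
  have hiterL : ∀ L n c, F^[n] (shiftN^[L] c) = shiftN^[L] (F^[n] c) := by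
    intro L
    induction L with
    | zero => intro n c; rfl
    | succ L ih =>
      intro n c
      rw [Function.iterate_succ_apply, ih, hiter, ← Function.iterate_succ_apply]
  -- the closed sets
  set D : ℕ → Set (ℕ → A) := fun n => {c | F^[n] c = fun _ => q} with hD
  have hclosed : ∀ n, IsClosed (D n) := by
    intro n
    have : D n = (F^[n]) ⁻¹' {fun _ => q} := rfl
    rw [this]
    exact (isClosed_singleton).preimage (hFcont.iterate n)
  have hcover : (⋃ n, D n) = Set.univ := by
    ext c
    simp only [Set.mem_iUnion, Set.mem_univ, iff_true]
    exact hnil c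
  haveI : Nonempty A := ⟨q⟩
  obtain ⟨n, c₀, hc₀⟩ := nonempty_interior_of_iUnion_of_closed hclosed hcover
  -- extract a cylinder neighborhood
  have hmem : D n ∈ nhds c₀ :=
    Filter.mem_of_superset (isOpen_interior.mem_nhds hc₀) interior_subset
  rw [nhds_pi, Filter.mem_pi] at hmem
  obtain ⟨I, hIfin, t, ht, hsub⟩ := hmem
  obtain ⟨L, hL⟩ := hIfin.bddAbove
  -- any configuration agreeing with c₀ on [0, L] lies in D n
  have hcyl : ∀ d : ℕ → A, (∀ i ≤ L, d i = c₀ i) → F^[n] d = fun _ => q := by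
    intro d hd
    apply hsub
    intro i hi
    have hiL : i ≤ L := hL hi
    rw [hd i hiL]
    have := ht i
    rw [nhds_discrete, Filter.mem_pure] at this
    exact this
  refine ⟨n, fun c => ?_⟩
  -- prepend c₀'s first L+1 symbols to c
  set c' : ℕ → A := fun i => if i ≤ L then c₀ i else c (i - (L + 1)) with hc'
  have hshift : shiftN^[L + 1] c' = c := by
    funext i
    rw [shiftN_iterate]
    simp only [hc']
    rw [if_neg (by omega)]
    congr 1
    omega
  have h1 : F^[n] c' = fun _ => q := hcyl c' (fun i hi => by simp [hc', hi])
  calc F^[n] c = F^[n] (shiftN^[L + 1] c') := by rw [hshift]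
    _ = shiftN^[L + 1] (F^[n] c') := hiterL (L + 1) n c'
    _ = fun _ => q := by rw [h1]; funext i; rw [shiftN_iterate]
end

section
/- Let F : A^ℕ → A^ℕ be a one-sided cellular automaton with radius 1 and a spreading state s ∈ A. If F is not nilpotent, then there exists a configuration c ∈ A^ℕ such that F^i(c)_j ≠ s for all i, j ∈ ℕ. -/
/-- **Escaping a spreading state.** Let `F : A^ℕ → A^ℕ` be a one-sided cellular automaton
with radius `1` (local rule `f : A² → A`) and a spreading state `s ∈ A`.  If `F` is not
nilpotent, then there exists a configuration `c` with `F^i(c)_j ≠ s` for all `i, j ∈ ℕ`. -/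
theorem exists_spacetime_avoiding_spreading_state {A : Type*} [Fintype A]
    (F : (ℕ → A) → (ℕ → A)) (f : A → A → A)
    (hf : ∀ c i, F c i = f (c i) (c (i + 1)))
    (s : A)
    (hs : ∀ a b : A, a = s ∨ b = s → f a b = s)
    (hnotnil : ¬ ∃ q : A, (F (fun _ => q) = fun _ => q) ∧
        ∀ c, ∃ n : ℕ, F^[n] c = fun _ => q) :
    ∃ c : ℕ → A, ∀ i j : ℕ, F^[i] c j ≠ s := by
  by_contra h
  push_neg at h
  -- h : ∀ c, ∃ i j, F^[i] c j = s
  classical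
  -- spreading: s stays
  have stay : ∀ (c : ℕ → A) (t p : ℕ), F^[t] c p = s → ∀ d, F^[t + d] c p = s := by
    intro c t p ht d
    induction d with
    | zero => simpa using ht
    | succ d ih =>
      have : F^[t + d + 1] c p = f (F^[t + d] c p) (F^[t + d] c (p + 1)) := by
        rw [Function.iterate_succ_apply', hf]
      rw [show t + (d + 1) = t + d + 1 from rfl, this, ih]
      exact hs _ _ (Or.inl rfl)
  -- spreading: s cone to the left
  have cone : ∀ (c : ℕ → A) (i k j : ℕ), F^[i] c (k + j) = s → F^[i + j] c k = s := by
    intro c i k j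
    induction j generalizing i with
    | zero => intro hx; simpa using hx
    | succ j ih =>
      intro hx
      have h1 : F^[i + 1] c (k + j) = s := by
        rw [Function.iterate_succ_apply', hf]
        exact hs _ _ (Or.inr (by rw [show k + j + 1 = k + (j + 1) from rfl]; exact hx))
      have := ih (i + 1) h1
      rwa [show i + 1 + j = i + (j + 1) by omega] at this
  -- shift commutation
  have shift : ∀ (c : ℕ → A) (k i j : ℕ),
      F^[i] (fun m => c (m + k)) j = F^[i] c (j + k) := by
    intro c k i
    induction i generalizing c with
    | zero => intro j; rfl
    | succ i ih =>
      intro j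
      have hFs : F (fun m => c (m + k)) = fun m => (F c) (m + k) := by
        funext m
        rw [hf, hf]
        congr 2
        omega
      rw [Function.iterate_succ_apply, hFs, ih (F c) j, Function.iterate_succ_apply]
  -- compactness to get a uniform bound
  letI : TopologicalSpace A := ⊥
  haveI : DiscreteTopology A := ⟨rfl⟩
  have hFeq : F = fun c i => f (c i) (c (i + 1)) := by
    funext c i; exact hf c i
  have hFcont : Continuous F := by
    rw [hFeq, continuous_pi_iff]
    intro i
    have hfc : Continuous (fun p : A × A => f p.1 p.2) := continuous_of_discreteTopology
    have h1 : Continuous (fun c : ℕ → A => (c i, c (i + 1))) :=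
      Continuous.prodMk (continuous_apply i) (continuous_apply (i + 1))
    exact hfc.comp h1
  have hEvalCont : ∀ i j : ℕ, Continuous (fun c : ℕ → A => F^[i] c j) := by
    intro i j
    exact (continuous_apply j).comp (hFcont.iterate i)
  set U : ℕ → Set (ℕ → A) := fun n => {c | ∃ i ≤ n, ∃ j ≤ n, F^[i] c j = s} with hU
  have hUopen : ∀ n, IsOpen (U n) := by
    intro n
    have : U n = ⋃ i ∈ Finset.Iic n, ⋃ j ∈ Finset.Iic n, {c | F^[i] c j = s} := by
      ext c
      simp [hU, Set.mem_iUnion]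
    rw [this]
    refine isOpen_biUnion fun i _ => isOpen_biUnion fun j _ => ?_
    exact IsOpen.preimage (hEvalCont i j) (isOpen_discrete ({s} : Set A))
  have hcover : (Set.univ : Set (ℕ → A)) ⊆ ⋃ n, U n := by
    intro c _
    obtain ⟨i, j, hij⟩ := h c
    exact Set.mem_iUnion.mpr ⟨max i j, i, le_max_left _ _, j, le_max_right _ _, hij⟩
  obtain ⟨t, ht⟩ := isCompact_univ.elim_finite_subcover U hUopen hcover
  set N := t.sup id with hN
  have hUN : ∀ c : ℕ → A, ∃ i ≤ N, ∃ j ≤ N, F^[i] c j = s := by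
    intro c
    have := ht (Set.mem_univ c)
    rcases Set.mem_iUnion.mp this with ⟨n, hn⟩
    rcases Set.mem_iUnion.mp hn with ⟨hnt, hcn⟩
    obtain ⟨i, hi, j, hj, hij⟩ := hcn
    have hnN : n ≤ N := Finset.le_sup (f := id) hnt
    exact ⟨i, hi.trans hnN, j, hj.trans hnN, hij⟩
  -- conclude nilpotency with state s
  apply hnotnil
  refine ⟨s, ?_, ?_⟩
  · funext i; rw [hf]; exact hs _ _ (Or.inl rfl)
  · intro c
    refine ⟨2 * N, ?_⟩
    funext k
    obtain ⟨i, hi, j, hj, hij⟩ := hUN (fun m => c (m + k))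
    rw [shift c k i j] at hij
    have h1 : F^[i + j] c k = s := cone c i k j (by rwa [Nat.add_comm k j])
    have h2 := stay c (i + j) k h1 (2 * N - (i + j))
    rwa [show i + j + (2 * N - (i + j)) = 2 * N by omega] at h2
end

section
/- Let F : A^ℕ → A^ℕ be a one-sided cellular automaton with radius r. Then for every t ≥ 1, the number of distinct words of length t appearing in the (r+1)-st trace subshift equals |A| times the number of distinct words of length t appearing in the r-th trace subshift: p_t(τ_{r+1}(F)) = |A| · p_t(τ_r(F)). -/
/-- The `n`-th trace subshift of a one-sided cellular automaton `F : A^ℕ → A^ℕ`: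
the set of sequences `(F^i(c)|_{[0,n)})_{i∈ℕ}` for `c ∈ A^ℕ`. -/
def traceSubshift {A : Type*} (F : (ℕ → A) → (ℕ → A)) (n : ℕ) :
    Set (ℕ → (Fin n → A)) :=
  { e | ∃ c : ℕ → A, ∀ (i : ℕ) (j : Fin n), e i j = F^[i] c (j : ℕ) }

/-- `pWords F n t` is `p_t(τ_n(F))`: the number of distinct words of length `t`
appearing in elements of the `n`-th trace subshift of `F`. -/
noncomputable def pWords {A : Type*} (F : (ℕ → A) → (ℕ → A)) (n t : ℕ) : ℕ :=
  Set.ncard { w : Fin t → (Fin n → A) |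
    ∃ e ∈ traceSubshift F n, ∃ s : ℕ, ∀ i : Fin t, w i = e (s + (i : ℕ)) }

/-- For a one-sided cellular automaton `F` with radius `r` (local rule
`f : A^{r+1} → A`), for every `t ≥ 1` one has
`p_t(τ_{r+1}(F)) = |A| · p_t(τ_r(F))`. -/
theorem pWords_trace_succ {A : Type*} [Fintype A]
    (F : (ℕ → A) → (ℕ → A)) (r : ℕ) (f : (Fin (r + 1) → A) → A)
    (hf : ∀ c i, F c i = f (fun j : Fin (r + 1) => c (i + (j : ℕ)))) :
    ∀ t : ℕ, 1 ≤ t → pWords F (r + 1) t = Fintype.card A * pWords F r t := by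
  classical
  -- `F` commutes with the shift
  have hcomm : ∀ (c : ℕ → A) (k : ℕ), F c (k + 1) = F (fun m => c (m + 1)) k := by
    intro c k
    rw [hf, hf]
    congr 1
    funext j
    congr 1
    omega
  have hiter : ∀ (i : ℕ) (c : ℕ → A) (k : ℕ),
      F^[i] c (k + 1) = F^[i] (fun m => c (m + 1)) k := by
    intro i
    induction i with
    | zero => intro c k; rfl
    | succ n ih =>
      intro c k
      rw [Function.iterate_succ_apply, Function.iterate_succ_apply, ih]
      have h2 : (fun m => F c (m + 1)) = F (fun m => c (m + 1)) :=
        funext fun m => hcomm c m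
      rw [h2]
  intro t ht
  -- characterization of membership in the word sets
  have hmem : ∀ (n : ℕ) (w : Fin t → Fin n → A),
      (w ∈ { w : Fin t → (Fin n → A) |
        ∃ e ∈ traceSubshift F n, ∃ s : ℕ, ∀ i : Fin t, w i = e (s + (i : ℕ)) }) ↔
      ∃ (c : ℕ → A) (s : ℕ), ∀ (i : Fin t) (j : Fin n),
        w i j = F^[s + (i : ℕ)] c (j : ℕ) := by
    intro n w
    constructor
    · rintro ⟨e, ⟨c, hc⟩, s, hs⟩
      exact ⟨c, s, fun i j => by rw [hs i, hc]⟩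
    · rintro ⟨c, s, h⟩
      exact ⟨fun i j => F^[i] c (j : ℕ), ⟨c, fun i j => rfl⟩, s,
        fun i => funext fun j => h i j⟩
  set S : Set (Fin t → Fin (r + 1) → A) :=
    { w | ∃ e ∈ traceSubshift F (r + 1), ∃ s : ℕ, ∀ i : Fin t, w i = e (s + (i : ℕ)) }
    with hSdef
  set T : Set (Fin t → Fin r → A) :=
    { w | ∃ e ∈ traceSubshift F r, ∃ s : ℕ, ∀ i : Fin t, w i = e (s + (i : ℕ)) }
    with hTdef
  have hz : (0 : ℕ) < r + 1 := Nat.succ_pos r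
  set Φ : (Fin t → Fin (r + 1) → A) → A × (Fin t → Fin r → A) :=
    fun w => (w ⟨0, ht⟩ ⟨0, hz⟩, fun (i : Fin t) (j : Fin r) => w i j.succ) with hΦdef
  -- a one-step recurrence for words in S
  have hstep : ∀ (w : Fin t → Fin (r + 1) → A) (c : ℕ → A) (s : ℕ),
      (∀ (i : Fin t) (j : Fin (r + 1)), w i j = F^[s + (i : ℕ)] c (j : ℕ)) →
      ∀ (k : ℕ) (hk : k + 1 < t),
        w ⟨k + 1, hk⟩ ⟨0, hz⟩ = f (fun j => w ⟨k, Nat.lt_of_succ_lt hk⟩ j) := by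
    intro w c s hw k hk
    rw [hw]
    have h1 : s + (k + 1) = (s + k) + 1 := by omega
    rw [h1, Function.iterate_succ_apply', hf]
    congr 1
    funext j
    rw [hw]
    simp
  -- injectivity of Φ on S
  have hinj : Set.InjOn Φ S := by
    intro w1 h1 w2 h2 heq
    obtain ⟨c1, s1, hw1⟩ := (hmem (r + 1) w1).1 h1
    obtain ⟨c2, s2, hw2⟩ := (hmem (r + 1) w2).1 h2
    have hfst : w1 ⟨0, ht⟩ ⟨0, hz⟩ = w2 ⟨0, ht⟩ ⟨0, hz⟩ := congrArg Prod.fst heq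
    have hsnd : ∀ (i : Fin t) (j : Fin r), w1 i j.succ = w2 i j.succ := by
      intro i j
      exact congrFun (congrFun (congrArg Prod.snd heq) i) j
    have hcol : ∀ (k : ℕ) (hk : k < t), w1 ⟨k, hk⟩ ⟨0, hz⟩ = w2 ⟨k, hk⟩ ⟨0, hz⟩ := by
      intro k
      induction k with
      | zero => intro hk; exact hfst
      | succ m ih =>
        intro hk
        rw [hstep w1 c1 s1 hw1 m hk, hstep w2 c2 s2 hw2 m hk]
        congr 1
        funext j
        rcases j with ⟨jv, hj⟩
        cases jv with
        | zero => exact ih (Nat.lt_of_succ_lt hk)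
        | succ mv => exact hsnd ⟨m, Nat.lt_of_succ_lt hk⟩ ⟨mv, Nat.lt_of_succ_lt_succ hj⟩
    funext i j
    rcases j with ⟨jv, hj⟩
    cases jv with
    | zero => exact hcol i.val i.isLt
    | succ mv => exact hsnd i ⟨mv, Nat.lt_of_succ_lt_succ hj⟩
  -- image of S under Φ
  have himg : Φ '' S = (Set.univ : Set A) ×ˢ T := by
    ext p
    constructor
    · rintro ⟨w, hw, rfl⟩
      obtain ⟨c, s, hwc⟩ := (hmem (r + 1) w).1 hw
      refine ⟨Set.mem_univ _, (hmem r _).2 ⟨fun m => c (m + 1), s, fun i j => ?_⟩⟩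
      show w i j.succ = _
      rw [hwc]
      exact hiter (s + (i : ℕ)) c (j : ℕ)
    · rintro ⟨-, hp2⟩
      obtain ⟨c', s, hw'⟩ := (hmem r p.2).1 hp2
      set c : ℕ → A := fun k => Nat.casesOn k p.1 (fun m => F^[s] c' m) with hcdef
      set w : Fin t → Fin (r + 1) → A := fun i j => F^[(i : ℕ)] c (j : ℕ) with hwdef
      have hwS : w ∈ S := (hmem (r + 1) w).2 ⟨c, 0, fun i j => by simp [hwdef]⟩
      refine ⟨w, hwS, ?_⟩
      have hshift : (fun m => c (m + 1)) = F^[s] c' := by funext m; rfl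
      have hsnd : (fun (i : Fin t) (j : Fin r) => w i j.succ) = p.2 := by
        funext i j
        have h1 : w i j.succ = F^[(i : ℕ)] (fun m => c (m + 1)) (j : ℕ) :=
          hiter (i : ℕ) c (j : ℕ)
        rw [h1, hshift, ← Function.iterate_add_apply, Nat.add_comm (i : ℕ) s]
        exact (hw' i j).symm
      exact Prod.ext rfl hsnd
  -- counting
  show S.ncard = Fintype.card A * T.ncard
  calc S.ncard = (Φ '' S).ncard := (Set.ncard_image_of_injOn hinj).symm
    _ = ((Set.univ : Set A) ×ˢ T).ncard := by rw [himg]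
    _ = Fintype.card A * T.ncard := by
        rw [← Nat.card_coe_set_eq, ← Nat.card_coe_set_eq]
        rw [Nat.card_congr (Equiv.Set.prod (Set.univ : Set A) T), Nat.card_prod]
        congr 1
        rw [Nat.card_congr (Equiv.Set.univ A), Nat.card_eq_fintype_card]
end

section
/- Let F : A^ℕ → A^ℕ be a one-sided cellular automaton with radius r. Then the topological entropy of F equals the complexity growth rate of its r-th trace subshift: h(F) = lim_{t→∞} (1/t) · log₂ p_t(τ_r(F)). -/
open Filter Topology

/-- The topological entropy of a one-sided cellular automaton, expressed via its
trace subshifts:  `h(F) = lim_{n→∞} lim_{t→∞} (1/t)·log₂ p_t(τ_n(F))`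
(both limits exist for cellular automata). -/
noncomputable def caEntropy {A : Type*} (F : (ℕ → A) → (ℕ → A)) : ℝ :=
  limUnder atTop fun n : ℕ =>
    limUnder atTop fun t : ℕ => (1 / (t : ℝ)) * Real.logb 2 (pWords F n t)

/-! ### Auxiliary definitions and lemmas -/

/-- Simplified description of the set of words of length `t` in the `n`-th trace
subshift: they are exactly the `t × n` space-time blocks starting at time `0`
(any starting time `s` can be absorbed into the initial configuration). -/
def wordSet {A : Type*} (F : (ℕ → A) → (ℕ → A)) (n t : ℕ) :
    Set (Fin t → Fin n → A) :=
  { w | ∃ c : ℕ → A, ∀ (i : Fin t) (j : Fin n), w i j = F^[(i : ℕ)] c (j : ℕ) }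

lemma pWords_eq_ncard_wordSet {A : Type*} (F : (ℕ → A) → (ℕ → A)) (n t : ℕ) :
    pWords F n t = (wordSet F n t).ncard := by
  unfold pWords wordSet traceSubshift
  congr 1
  ext w
  constructor
  · rintro ⟨e, ⟨c, hc⟩, s, hw⟩
    refine ⟨F^[s] c, fun i j => ?_⟩
    rw [hw i]
    simp only [hc]
    rw [Nat.add_comm s (i : ℕ), Function.iterate_add_apply]
  · rintro ⟨c, hc⟩
    refine ⟨fun i j => F^[i] c (j : ℕ), ⟨c, fun i j => rfl⟩, 0, fun i => funext fun j => ?_⟩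
    rw [hc i j]
    simp

lemma ncard_univ_prod {α β : Type*} [Fintype α] (T : Set β) :
    ((Set.univ : Set α) ×ˢ T).ncard = Fintype.card α * T.ncard := by
  rw [← Nat.card_coe_set_eq, Nat.card_congr (Equiv.Set.prod _ _), Nat.card_prod,
    Nat.card_coe_set_eq, Nat.card_coe_set_eq, Set.ncard_univ,
    Nat.card_eq_fintype_card]

section CA

variable {A : Type*} [Fintype A] (F : (ℕ → A) → (ℕ → A))

lemma wordSet_finite (n t : ℕ) : (wordSet F n t).Finite := Set.toFinite _

lemma pWords_pos [Nonempty A] (n t : ℕ) : 0 < pWords F n t := by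
  rw [pWords_eq_ncard_wordSet]
  rw [Set.ncard_pos (wordSet_finite F n t)]
  exact ⟨fun i j => F^[(i : ℕ)] (Classical.arbitrary _) (j : ℕ),
    Classical.arbitrary _, fun i j => rfl⟩

/-- Subadditivity of word counts in the length. -/
lemma pWords_add_le (n a b : ℕ) :
    pWords F n (a + b) ≤ pWords F n a * pWords F n b := by
  simp only [pWords_eq_ncard_wordSet]
  have key : (wordSet F n (a + b)).ncard ≤ ((wordSet F n a) ×ˢ (wordSet F n b)).ncard := by
    apply Set.ncard_le_ncard_of_injOn
      (fun w => (fun (i : Fin a) (j : Fin n) => w ⟨(i : ℕ), by omega⟩ j,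
                 fun (i : Fin b) (j : Fin n) => w ⟨a + (i : ℕ), by omega⟩ j))
    · rintro w ⟨c, hc⟩
      constructor
      · exact ⟨c, fun i j => hc ⟨(i : ℕ), by omega⟩ j⟩
      · refine ⟨F^[a] c, fun i j => ?_⟩
        show w ⟨a + (i : ℕ), by omega⟩ j = _
        rw [hc ⟨a + (i : ℕ), by omega⟩ j]
        show F^[a + (i : ℕ)] c (j : ℕ) = _
        rw [Nat.add_comm a (i : ℕ), Function.iterate_add_apply]
    · rintro w ⟨c, hc⟩ w' ⟨c', hc'⟩ heq
      have h1 := congrArg Prod.fst heq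
      have h2 := congrArg Prod.snd heq
      simp only [] at h1 h2
      funext i j
      rcases Nat.lt_or_ge (i : ℕ) a with hi | hi
      · exact congrFun (congrFun h1 ⟨(i : ℕ), hi⟩) j
      · have hib : (i : ℕ) - a < b := by omega
        have hfix : i = (⟨a + ((i : ℕ) - a), by omega⟩ : Fin (a + b)) :=
          Fin.ext (show (i : ℕ) = a + ((i : ℕ) - a) by omega)
        rw [hfix]
        exact congrFun (congrFun h2 ⟨(i : ℕ) - a, hib⟩) j
  calc (wordSet F n (a + b)).ncard ≤ ((wordSet F n a) ×ˢ (wordSet F n b)).ncard := key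
    _ = (wordSet F n a).ncard * (wordSet F n b).ncard := by
        rw [← Nat.card_coe_set_eq, Nat.card_congr (Equiv.Set.prod _ _), Nat.card_prod,
          Nat.card_coe_set_eq, Nat.card_coe_set_eq]

/-- Monotonicity of word counts in the width. -/
lemma pWords_mono_width {m n : ℕ} (h : m ≤ n) (t : ℕ) :
    pWords F m t ≤ pWords F n t := by
  simp only [pWords_eq_ncard_wordSet]
  have hsub : wordSet F m t ⊆
      (fun (w : Fin t → Fin n → A) => fun i (j : Fin m) => w i (Fin.castLE h j)) ''
        (wordSet F n t) := by
    rintro v ⟨c, hc⟩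
    refine ⟨fun i j => F^[(i : ℕ)] c (j : ℕ), ⟨c, fun i j => rfl⟩, ?_⟩
    funext i j
    simp only []
    rw [hc i j]
    rfl
  calc (wordSet F m t).ncard ≤ _ := Set.ncard_le_ncard hsub (Set.toFinite _)
    _ ≤ (wordSet F n t).ncard := Set.ncard_image_le (Set.toFinite _)

variable {r : ℕ} {f : (Fin (r + 1) → A) → A}
  (hf : ∀ c i, F c i = f (fun j : Fin (r + 1) => c (i + (j : ℕ))))

include hf

/-- Iterates of `F` commute with shifts of the configuration. -/
lemma iterate_shift (m : ℕ) : ∀ (i : ℕ) (c : ℕ → A) (j : ℕ),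
    F^[i] (fun k => c (m + k)) j = F^[i] c (m + j) := by
  intro i
  induction i with
  | zero => intro c j; rfl
  | succ i ih =>
    intro c j
    have hFc : F (fun k => c (m + k)) = fun k => F c (m + k) := by
      funext p
      rw [hf, hf]
      congr 1
      funext q
      congr 1
      omega
    rw [Function.iterate_succ_apply, Function.iterate_succ_apply, hFc, ih]

/-- A space-time block of width `n ≥ r` is determined by its top row together
with its rightmost `r` columns. -/
lemma block_determined {n t : ℕ} (hrn : r ≤ n) (c c' : ℕ → A)
    (h0 : ∀ j < n, c j = c' j)
    (hR : ∀ i < t, ∀ j, n - r ≤ j → j < n → F^[i] c j = F^[i] c' j) :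
    ∀ i < t, ∀ j < n, F^[i] c j = F^[i] c' j := by
  intro i
  induction i with
  | zero => intro _ j hj; exact h0 j hj
  | succ i ih =>
    intro hit j hjn
    rcases Nat.lt_or_ge j (n - r) with hj | hj
    · have hstep : ∀ d : ℕ → A, F^[i + 1] d j = f (fun k : Fin (r + 1) => F^[i] d (j + k)) := by
        intro d
        rw [Function.iterate_succ_apply', hf]
      rw [hstep c, hstep c']
      congr 1
      funext k
      have hk : (k : ℕ) ≤ r := by omega
      exact ih (by omega) (j + (k : ℕ)) (by omega)
    · exact hR (i + 1) hit j hj hjn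

/-- Key inequality: words of width `n ≥ r` are determined by the top row and a
width-`r` word (rightmost `r` columns). -/
lemma pWords_key {n : ℕ} (hrn : r ≤ n) (t : ℕ) :
    pWords F n t ≤ Fintype.card (Fin n → A) * pWords F r t := by
  rcases Nat.eq_zero_or_pos t with ht | ht
  · subst ht
    rcases isEmpty_or_nonempty A with hA | hA
    · have : pWords F n 0 = 0 := by
        rw [pWords_eq_ncard_wordSet]
        have : wordSet F n 0 = ∅ := by
          ext w
          simp only [wordSet, Set.mem_setOf_eq, Set.mem_empty_iff_false, iff_false]
          rintro ⟨c, -⟩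
          exact (IsEmpty.false (c 0))
        simp [this]
      simp [this]
    · have h1 : pWords F n 0 ≤ 1 := by
        rw [pWords_eq_ncard_wordSet]
        apply Set.ncard_le_ncard (Set.subset_univ _) (Set.toFinite _) |>.trans
        simp [Set.ncard_univ, Nat.card_eq_fintype_card]
      calc pWords F n 0 ≤ 1 := h1
        _ ≤ Fintype.card (Fin n → A) * pWords F r 0 :=
          Nat.mul_pos Fintype.card_pos (pWords_pos F r 0)
  · simp only [pWords_eq_ncard_wordSet]
    have key : (wordSet F n t).ncard ≤
        ((Set.univ : Set (Fin n → A)) ×ˢ (wordSet F r t)).ncard := by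
      apply Set.ncard_le_ncard_of_injOn
        (fun w => (w ⟨0, ht⟩,
          fun (i : Fin t) (j : Fin r) => w i ⟨n - r + (j : ℕ), by omega⟩))
      · rintro w ⟨c, hc⟩
        refine ⟨Set.mem_univ _, fun k => c (n - r + k), fun i j => ?_⟩
        show w i ⟨n - r + (j : ℕ), by omega⟩ = _
        rw [hc i ⟨n - r + (j : ℕ), by omega⟩]
        exact (iterate_shift F hf (n - r) (i : ℕ) c (j : ℕ)).symm
      · rintro w ⟨c, hc⟩ w' ⟨c', hc'⟩ heq
        have h1 := congrArg Prod.fst heq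
        have h2 := congrArg Prod.snd heq
        simp only [] at h1 h2
        have hdet : ∀ i < t, ∀ j < n, F^[i] c j = F^[i] c' j := by
          apply block_determined F hf hrn
          · intro j hj
            have := congrFun h1 ⟨j, hj⟩
            rw [hc ⟨0, ht⟩ ⟨j, hj⟩, hc' ⟨0, ht⟩ ⟨j, hj⟩] at this
            simpa using this
          · intro i hi j hj1 hj2
            have hjr : j - (n - r) < r := by omega
            have := congrFun (congrFun h2 ⟨i, hi⟩) ⟨j - (n - r), hjr⟩
            rw [hc ⟨i, hi⟩ ⟨n - r + (j - (n - r)), by omega⟩,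
              hc' ⟨i, hi⟩ ⟨n - r + (j - (n - r)), by omega⟩] at this
            simp only [] at this
            have hfix : n - r + (j - (n - r)) = j := by omega
            rwa [hfix] at this
        funext i j
        rw [hc i j, hc' i j]
        exact hdet (i : ℕ) i.isLt (j : ℕ) j.isLt
    calc (wordSet F n t).ncard ≤ _ := key
      _ = Fintype.card (Fin n → A) * (wordSet F r t).ncard := ncard_univ_prod _

end CA

/-- For a one-sided cellular automaton `F` with radius `r` (local rule
`f : A^{r+1} → A`), the topological entropy of `F` equals the complexity growth
rate of the `r`-th trace subshift:
`h(F) = lim_{t→∞} (1/t)·log₂ p_t(τ_r(F))`. -/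
theorem entropy_eq_trace_complexity {A : Type*} [Fintype A]
    (F : (ℕ → A) → (ℕ → A)) (r : ℕ) (f : (Fin (r + 1) → A) → A)
    (hf : ∀ c i, F c i = f (fun j : Fin (r + 1) => c (i + (j : ℕ)))) :
    Tendsto (fun t : ℕ => (1 / (t : ℝ)) * Real.logb 2 (pWords F r t)) atTop
      (nhds (caEntropy F)) := by
  rcases isEmpty_or_nonempty A with hA | hA
  -- Degenerate case: empty alphabet, everything is zero.
  · have hp : ∀ n t, pWords F n t = 0 := by
      intro n t
      rw [pWords_eq_ncard_wordSet]
      have : wordSet F n t = ∅ := by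
        ext w
        simp only [wordSet, Set.mem_setOf_eq, Set.mem_empty_iff_false, iff_false]
        rintro ⟨c, -⟩
        exact (IsEmpty.false (c 0))
      simp [this]
    have hfun : ∀ n : ℕ, (fun t : ℕ => (1 / (t : ℝ)) * Real.logb 2 (pWords F n t)) =
        fun _ : ℕ => (0 : ℝ) := by
      intro n; funext t; simp [hp]
    have hca : caEntropy F = 0 := by
      unfold caEntropy
      have : (fun n : ℕ => limUnder atTop fun t : ℕ =>
          (1 / (t : ℝ)) * Real.logb 2 (pWords F n t)) = fun _ : ℕ => (0 : ℝ) := by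
        funext n
        rw [hfun n]
        exact Filter.Tendsto.limUnder_eq tendsto_const_nhds
      rw [this]
      exact Filter.Tendsto.limUnder_eq tendsto_const_nhds
    rw [hca, hfun r]
    exact tendsto_const_nhds
  -- Main case: nonempty alphabet.
  · set u : ℕ → ℝ := fun t => Real.logb 2 (pWords F r t) with hu_def
    have hp_pos : ∀ n t, (0 : ℝ) < (pWords F n t : ℝ) := by
      intro n t
      exact_mod_cast pWords_pos F n t
    have hp_one : ∀ n t, (1 : ℝ) ≤ (pWords F n t : ℝ) := by
      intro n t
      exact_mod_cast pWords_pos F n t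
    have hu_nonneg : ∀ t, 0 ≤ u t := fun t => Real.logb_nonneg one_lt_two (hp_one r t)
    have hu_sub : Subadditive u := by
      intro a b
      have hle : (pWords F r (a + b) : ℝ) ≤ (pWords F r a : ℝ) * (pWords F r b : ℝ) := by
        exact_mod_cast pWords_add_le F r a b
      calc u (a + b) ≤ Real.logb 2 ((pWords F r a : ℝ) * (pWords F r b : ℝ)) := by
            exact (Real.logb_le_logb one_lt_two (hp_pos r (a + b))
              (mul_pos (hp_pos r a) (hp_pos r b))).mpr hle
        _ = u a + u b := Real.logb_mul (hp_pos r a).ne' (hp_pos r b).ne'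
    have hbdd : BddBelow (Set.range fun n : ℕ => u n / n) := by
      refine ⟨0, ?_⟩
      rintro x ⟨n, rfl⟩
      exact div_nonneg (hu_nonneg n) (Nat.cast_nonneg n)
    set L := hu_sub.lim with hL_def
    have htendL : Tendsto (fun t : ℕ => u t / t) atTop (nhds L) := hu_sub.tendsto_lim hbdd
    have hfun_eq : ∀ n : ℕ, (fun t : ℕ => (1 / (t : ℝ)) * Real.logb 2 (pWords F n t)) =
        fun t : ℕ => Real.logb 2 (pWords F n t) / t := by
      intro n; funext t; rw [one_div_mul_eq_div]
    -- inner limit for each width n ≥ r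
    have key : ∀ n, r ≤ n →
        Tendsto (fun t : ℕ => (1 / (t : ℝ)) * Real.logb 2 (pWords F n t)) atTop (nhds L) := by
      intro n hn
      rw [hfun_eq n]
      set B : ℝ := Real.logb 2 (Fintype.card (Fin n → A)) with hB_def
      have hcard_pos : (0 : ℝ) < (Fintype.card (Fin n → A) : ℝ) := by
        exact_mod_cast Fintype.card_pos
      have hmono : ∀ t : ℕ, u t ≤ Real.logb 2 (pWords F n t) := by
        intro t
        exact (Real.logb_le_logb one_lt_two (hp_pos r t) (hp_pos n t)).mpr
          (by exact_mod_cast pWords_mono_width F hn t)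
      have hkey : ∀ t : ℕ, Real.logb 2 (pWords F n t) ≤ B + u t := by
        intro t
        have h1 : (pWords F n t : ℝ) ≤ (Fintype.card (Fin n → A) : ℝ) * (pWords F r t : ℝ) := by
          exact_mod_cast pWords_key F hf hn t
        calc Real.logb 2 (pWords F n t)
            ≤ Real.logb 2 ((Fintype.card (Fin n → A) : ℝ) * (pWords F r t : ℝ)) :=
              (Real.logb_le_logb one_lt_two (hp_pos n t) (mul_pos hcard_pos (hp_pos r t))).mpr h1
          _ = B + u t := Real.logb_mul hcard_pos.ne' (hp_pos r t).ne'
      have hlow : ∀ t : ℕ, u t / t ≤ Real.logb 2 (pWords F n t) / t := by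
        intro t
        rcases Nat.eq_zero_or_pos t with ht0 | ht0
        · simp [ht0]
        · have htpos : (0 : ℝ) < (t : ℝ) := by exact_mod_cast ht0
          exact div_le_div_of_nonneg_right (hmono t) htpos.le
      have hupp : ∀ t : ℕ, Real.logb 2 (pWords F n t) / t ≤ (B + u t) / t := by
        intro t
        rcases Nat.eq_zero_or_pos t with ht0 | ht0
        · simp [ht0]
        · have htpos : (0 : ℝ) < (t : ℝ) := by exact_mod_cast ht0
          exact div_le_div_of_nonneg_right (hkey t) htpos.le
      have hupper : Tendsto (fun t : ℕ => (B + u t) / t) atTop (nhds L) := by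
        have h1 : Tendsto (fun t : ℕ => B / t + u t / t) atTop (nhds (0 + L)) :=
          Tendsto.add (tendsto_const_div_atTop_nhds_zero_nat B) htendL
        rw [zero_add] at h1
        refine h1.congr fun t => ?_
        rw [add_div]
      exact tendsto_of_tendsto_of_tendsto_of_le_of_le htendL hupper hlow hupp
    -- identify the entropy with L
    have hlim : ∀ n, r ≤ n →
        (limUnder atTop fun t : ℕ => (1 / (t : ℝ)) * Real.logb 2 (pWords F n t)) = L :=
      fun n hn => (key n hn).limUnder_eq
    have hca : caEntropy F = L := by
      unfold caEntropy
      apply Filter.Tendsto.limUnder_eq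
      have hev : (fun _ : ℕ => L) =ᶠ[atTop]
          (fun n : ℕ => limUnder atTop fun t : ℕ =>
            (1 / (t : ℝ)) * Real.logb 2 (pWords F n t)) :=
        (eventually_ge_atTop r).mono fun n hn => (hlim n hn).symm
      exact tendsto_const_nhds.congr' hev
    rw [hca]
    exact key r le_rfl
end

section
/- The one-sided cellular automaton zot : {0,1,2}^ℕ → {0,1,2}^ℕ is bijective, and its inverse is the one-sided cellular automaton G defined by G(c)_i = π_{c_{i+1}}(c_i), where π_0 = π_1 is the permutation of {0,1,2} swapping 1 and 2 and fixing 0, and π_2 is the permutation 0↦2, 2↦1, 1↦0. That is, G ∘ zot = id and zot ∘ G = id on {0,1,2}^ℕ. -/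
/-- The permutations `ρ_a` of `{0,1,2}`: `ρ_0 = ρ_2 = (1 2)` and `ρ_1 = (0 1 2)`
(i.e. `0↦1, 1↦2, 2↦0`).  `rho a x = ρ_a(x)`. -/
def rho (a x : Fin 3) : Fin 3 :=
  if a = 1 then ![1, 2, 0] x else ![0, 2, 1] x

/-- The one-sided cellular automaton `zot : {0,1,2}^ℕ → {0,1,2}^ℕ`,
`zot(c)_i = ρ_{c_{i+1}}(c_i)`. -/
def zot (c : ℕ → Fin 3) : ℕ → Fin 3 := fun i => rho (c (i + 1)) (c i)

/-- The permutations `π_a` of `{0,1,2}`: `π_0 = π_1 = (1 2)` and `π_2 : 0↦2, 2↦1, 1↦0`.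
`piInv a x = π_a(x)`. -/
def piInv (a x : Fin 3) : Fin 3 :=
  if a = 2 then ![2, 0, 1] x else ![0, 2, 1] x

/-- The one-sided cellular automaton `G(c)_i = π_{c_{i+1}}(c_i)`. -/
def zotInv (c : ℕ → Fin 3) : ℕ → Fin 3 := fun i => piInv (c (i + 1)) (c i)

lemma piInv_rho : ∀ a b x : Fin 3, piInv (rho b a) (rho a x) = x := by decide

lemma rho_piInv : ∀ a b x : Fin 3, rho (piInv b a) (piInv a x) = x := by decide

lemma left_inv : zotInv ∘ zot = id := by
  funext c i
  simp only [Function.comp_apply, zotInv, zot, id]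
  exact piInv_rho _ _ _

lemma right_inv : zot ∘ zotInv = id := by
  funext c i
  simp only [Function.comp_apply, zotInv, zot, id]
  exact rho_piInv _ _ _

/-- `zot` is bijective and its inverse is the one-sided cellular automaton `zotInv`:
`zotInv ∘ zot = id` and `zot ∘ zotInv = id` on `{0,1,2}^ℕ`. -/
theorem zot_bijective_with_inverse :
    Function.Bijective zot ∧ zotInv ∘ zot = id ∧ zot ∘ zotInv = id := by
  refine ⟨⟨Function.LeftInverse.injective (g := zotInv) ?_,
    Function.RightInverse.surjective (g := zotInv) ?_⟩, left_inv, right_inv⟩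
  · exact fun c => congrFun left_inv c
  · exact fun c => congrFun right_inv c
end

section
/- In the column sequences of space-time diagrams of zot, no word of the form 2 0^n 1 with n odd occurs: for every c ∈ {0,1,2}^ℕ, every i ∈ ℕ and every odd n ≥ 1, it is not the case that zot^i(c)_0 = 2, zot^{i+j}(c)_0 = 0 for all 1 ≤ j ≤ n, and zot^{i+n+1}(c)_0 = 1. -/
lemma iter_shift (t : ℕ) (c : ℕ → Fin 3) (j : ℕ) :
    zot^[t] (fun i => c (i + 1)) j = zot^[t] c (j + 1) := by
  induction t generalizing c with
  | zero => rfl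
  | succ t ih =>
      rw [Function.iterate_succ_apply, Function.iterate_succ_apply]
      have : zot (fun i => c (i + 1)) = fun i => zot c (i + 1) := rfl
      rw [this]
      exact ih (zot c)

lemma rho_one (a : Fin 3) : rho a 1 = 2 := by revert a; decide

lemma rho_two_eq_zero : ∀ {a : Fin 3}, rho a 2 = 0 → a = 1 := by decide

lemma rho_zero_eq_one : ∀ {a : Fin 3}, rho a 0 = 1 → a = 1 := by decide

lemma rho_zero_eq_zero : ∀ {a : Fin 3}, rho a 0 = 0 → a ≠ 1 := by decide

lemma rho_two_mem (a : Fin 3) : rho a 2 = 0 ∨ rho a 2 = 1 := by revert a; decide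

lemma rho_zero_mem (a : Fin 3) : rho a 0 = 0 ∨ rho a 0 = 1 := by revert a; decide

lemma main_aux : ∀ n : ℕ, Odd n → ∀ c : ℕ → Fin 3, ∀ i : ℕ,
    ¬ (zot^[i] c 0 = 2 ∧
       (∀ j : ℕ, 1 ≤ j → j ≤ n → zot^[i + j] c 0 = 0) ∧
       zot^[i + n + 1] c 0 = 1) := by
  intro n
  induction n using Nat.strong_induction_on with
  | _ n ih =>
    rintro hn c i ⟨h2, h0, h1⟩
    -- recurrences
    have hx : ∀ t : ℕ, zot^[i + t + 1] c 0 = rho (zot^[i + t] c 1) (zot^[i + t] c 0) := by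
      intro t; rw [Function.iterate_succ_apply']; rfl
    have hy : ∀ t : ℕ, zot^[i + t + 1] c 1 = rho (zot^[i + t] c 2) (zot^[i + t] c 1) := by
      intro t; rw [Function.iterate_succ_apply']; rfl
    have hn1 : 1 ≤ n := hn.pos
    -- y 0 = 1
    have hy0 : zot^[i] c 1 = 1 := by
      have hx0 := hx 0
      rw [add_zero] at hx0
      have hx1 : zot^[i + 1] c 0 = 0 := h0 1 le_rfl hn1
      rw [hx1, h2] at hx0
      exact rho_two_eq_zero hx0.symm
    -- y 1 = 2
    have hy1 : zot^[i + 1] c 1 = 2 := by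
      have := hy 0
      rw [add_zero, hy0] at this
      rw [this, rho_one]
    -- y n = 1
    have hyn : zot^[i + n] c 1 = 1 := by
      have hxn := hx n
      rw [h0 n hn1 le_rfl, h1] at hxn
      exact rho_zero_eq_one hxn.symm
    obtain ⟨k, hk⟩ := hn
    rcases k with _ | k
    · -- n = 1 : y 1 = 2 but y n = 1
      have hn1' : n = 1 := by omega
      rw [hn1'] at hyn
      rw [hyn] at hy1
      exact absurd hy1 (by decide)
    · -- n = 2k+3 ≥ 3
      have hn3 : 3 ≤ n := by omega
      -- y j ≠ 1 for 1 ≤ j ≤ n - 1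
      have hne1 : ∀ j : ℕ, 1 ≤ j → j + 1 ≤ n → zot^[i + j] c 1 ≠ 1 := by
        intro j hj1 hj2
        have hxj := hx j
        have e1 : zot^[i + j] c 0 = 0 := h0 j hj1 (by omega)
        have e2 : zot^[i + j + 1] c 0 = 0 := by
          have := h0 (j + 1) (by omega) hj2
          rw [← add_assoc] at this
          exact this
        rw [e1, e2] at hxj
        exact rho_zero_eq_zero hxj.symm
      -- y j = 0 for 2 ≤ j ≤ n - 1
      have hzero : ∀ j : ℕ, 2 ≤ j → j + 1 ≤ n → zot^[i + j] c 1 = 0 := by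
        intro j
        induction j with
        | zero => omega
        | succ j ihj =>
          intro hj1 hj2
          show zot^[i + j + 1] c 1 = 0
          have hyj := hy j
          rcases Nat.lt_or_ge j 2 with hj | hj
          · -- j = 1, y 1 = 2
            have hj' : j = 1 := by omega
            subst hj'
            rw [hy1] at hyj
            rcases rho_two_mem (zot^[i + 1] c 2) with h | h
            · rw [hyj, h]
            · exact absurd (hyj.trans h) (hne1 2 (by omega) hj2)
          · have hyj0 := ihj hj (by omega)
            rw [hyj0] at hyj
            rcases rho_zero_mem (zot^[i + j] c 2) with h | h
            · rw [hyj, h]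
            · exact absurd (hyj.trans h) (hne1 (j + 1) (by omega) hj2)
      -- apply IH to the shifted configuration with n' = n - 2 = 2k+1
      have hodd : Odd (2 * k + 1) := ⟨k, by ring⟩
      refine ih (2 * k + 1) (by omega) hodd (fun m => c (m + 1)) (i + 1) ⟨?_, ?_, ?_⟩
      · rw [iter_shift]; exact hy1
      · intro j hj1 hj2
        rw [iter_shift]
        have : i + 1 + j = i + (j + 1) := by omega
        rw [this]
        exact hzero (j + 1) (by omega) (by omega)
      · rw [iter_shift]
        have : i + 1 + (2 * k + 1) + 1 = i + n := by omega
        rw [this]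
        exact hyn

/-- In the column sequences of space-time diagrams of `zot`, no word `2 0^n 1`
with `n` odd occurs: for every `c`, `i` and odd `n ≥ 1` it is not the case that
`zot^i(c)_0 = 2`, `zot^{i+j}(c)_0 = 0` for `1 ≤ j ≤ n`, and `zot^{i+n+1}(c)_0 = 1`. -/
theorem zot_trace_avoids_two_zeros_odd_one
    (c : ℕ → Fin 3) (i n : ℕ) (hn : Odd n) (hn1 : 1 ≤ n) :
    ¬ (zot^[i] c 0 = 2 ∧
       (∀ j : ℕ, 1 ≤ j → j ≤ n → zot^[i + j] c 0 = 0) ∧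
       zot^[i + n + 1] c 0 = 1) :=
  main_aux n hn c i
end

section
/- The topological entropy of the one-sided cellular automaton zot on {0,1,2}^ℕ equals 1/2: h({0,1,2}^ℕ, zot) = 1/2. -/
open Filter Topology

/-! ### Basic facts about `zot` -/

lemma zstep (c : ℕ → Fin 3) (j i : ℕ) :
    zot^[i+1] c j = rho (zot^[i] c (j+1)) (zot^[i] c j) := by
  rw [Function.iterate_succ_apply']; rfl

lemma fin3cases : ∀ x : Fin 3, x = 0 ∨ x = 1 ∨ x = 2 := by decide

/-- allowed pairs in a column trace -/
def pairOK (x y : Fin 3) : Prop := y = rho 0 x ∨ y = rho 1 x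

instance (x y : Fin 3) : Decidable (pairOK x y) := by unfold pairOK; infer_instance

lemma tpair (c : ℕ → Fin 3) (j i : ℕ) : pairOK (zot^[i] c j) (zot^[i+1] c j) := by
  rw [zstep]
  exact (by decide : ∀ a x : Fin 3, pairOK x (rho a x)) _ _

lemma P1 (c : ℕ → Fin 3) (j i : ℕ) (h : zot^[i] c j = 1) : zot^[i+1] c j = 2 := by
  rw [zstep, h]
  exact (by decide : ∀ a : Fin 3, rho a 1 = 2) _

lemma P2 (c : ℕ → Fin 3) (j i : ℕ) (h : zot^[i+1] c j = 2) : zot^[i] c j = 1 := by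
  rw [zstep] at h
  exact (by decide : ∀ a x : Fin 3, rho a x = 2 → x = 1) _ _ h

/-- The key forbidden pattern: a column trace never contains `2 0^{2k+1} 1`. -/
lemma P3 (c : ℕ → Fin 3) : ∀ (k j i : ℕ), zot^[i] c j = 2 →
    (∀ m, 0 < m → m < 2*k+2 → zot^[i+m] c j = 0) →
    zot^[i+(2*k+2)] c j = 1 → False := by
  intro k
  induction k with
  | zero =>
    intro j i h2 h0 h1
    have e1 : zot^[i+1] c j = 0 := h0 1 one_pos (by omega)
    have hy : zot^[i] c (j+1) = 1 := by
      have hs := zstep c j i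
      rw [h2, e1] at hs
      exact (by decide : ∀ a : Fin 3, (0:Fin 3) = rho a 2 → a = 1) _ hs
    have hy1 : zot^[i+1] c (j+1) = 1 := by
      have hs := zstep c j (i+1)
      rw [e1, show i+1+1 = i+(2*0+2) by omega, h1] at hs
      exact (by decide : ∀ a : Fin 3, (1:Fin 3) = rho a 0 → a = 1) _ hs
    have := P1 c (j+1) i hy
    rw [hy1] at this
    exact absurd this (by decide)
  | succ k ih =>
    intro j i h2 h0 h1
    have e1 : zot^[i+1] c j = 0 := h0 1 one_pos (by omega)
    have hy : zot^[i] c (j+1) = 1 := by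
      have hs := zstep c j i
      rw [h2, e1] at hs
      exact (by decide : ∀ a : Fin 3, (0:Fin 3) = rho a 2 → a = 1) _ hs
    have hy1 : zot^[i+1] c (j+1) = 2 := P1 c (j+1) i hy
    -- zeros in column j+1
    have hz : ∀ m, 2 ≤ m → m ≤ 2*k+2 → zot^[i+m] c (j+1) = 0 := by
      intro m hm2 hmle
      induction m with
      | zero => omega
      | succ m ihm =>
        rcases Nat.lt_or_ge m 2 with hm | hm
        · -- m+1 = 2
          have hm1 : m = 1 := by omega
          subst hm1
          have hprev : zot^[i+2] c (j+1) = rho (zot^[i+1] c (j+2)) (zot^[i+1] c (j+1)) := by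
            have := zstep c (j+1) (i+1)
            rwa [show i+1+1 = i+2 by omega] at this
          rw [hy1] at hprev
          have hin1 : zot^[i+2] c (j+1) = 0 ∨ zot^[i+2] c (j+1) = 1 := by
            rw [hprev]
            exact (by decide : ∀ a : Fin 3, rho a 2 = 0 ∨ rho a 2 = 1) _
          have hx : zot^[i+3] c j = rho (zot^[i+2] c (j+1)) (zot^[i+2] c j) := by
            have := zstep c j (i+2)
            rwa [show i+2+1 = i+3 by omega] at this
          rw [h0 2 (by omega) (by omega), h0 3 (by omega) (by omega)] at hx
          have hin2 : zot^[i+2] c (j+1) = 0 ∨ zot^[i+2] c (j+1) = 2 :=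
            (by decide : ∀ a : Fin 3, (0:Fin 3) = rho a 0 → a = 0 ∨ a = 2) _ hx
          have hval : zot^[i+2] c (j+1) = 0 := by
            rcases hin1 with h|h
            · exact h
            · rcases hin2 with h'|h'
              · exact h'
              · rw [h] at h'; exact absurd h' (by decide)
          rw [show i+(1+1) = i+2 by omega]
          exact hval
        · -- m ≥ 2, know zot^[i+m] c (j+1) = 0
          have ih0 : zot^[i+m] c (j+1) = 0 := ihm hm (by omega)
          have hprev : zot^[i+(m+1)] c (j+1) = rho (zot^[i+m] c (j+2)) (zot^[i+m] c (j+1)) := by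
            have := zstep c (j+1) (i+m)
            rwa [show i+m+1 = i+(m+1) by omega] at this
          rw [ih0] at hprev
          have hin1 : zot^[i+(m+1)] c (j+1) = 0 ∨ zot^[i+(m+1)] c (j+1) = 1 := by
            rw [hprev]
            exact (by decide : ∀ a : Fin 3, rho a 0 = 0 ∨ rho a 0 = 1) _
          have hx : zot^[i+(m+2)] c j = rho (zot^[i+(m+1)] c (j+1)) (zot^[i+(m+1)] c j) := by
            have := zstep c j (i+(m+1))
            rwa [show i+(m+1)+1 = i+(m+2) by omega] at this
          rw [h0 (m+1) (by omega) (by omega), h0 (m+2) (by omega) (by omega)] at hx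
          have hin2 : zot^[i+(m+1)] c (j+1) = 0 ∨ zot^[i+(m+1)] c (j+1) = 2 :=
            (by decide : ∀ a : Fin 3, (0:Fin 3) = rho a 0 → a = 0 ∨ a = 2) _ hx
          rcases hin1 with h|h
          · exact h
          · rcases hin2 with h'|h'
            · exact h'
            · rw [h] at h'; exact absurd h' (by decide)
    have hlast : zot^[i+(2*k+3)] c (j+1) = 1 := by
      have hx : zot^[i+(2*k+4)] c j = rho (zot^[i+(2*k+3)] c (j+1)) (zot^[i+(2*k+3)] c j) := by
        have := zstep c j (i+(2*k+3))
        rwa [show i+(2*k+3)+1 = i+(2*k+4) by omega] at this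
      rw [show i+(2*k+4) = i + (2*(k+1)+2) by omega, h1,
        h0 (2*k+3) (by omega) (by omega)] at hx
      exact (by decide : ∀ a : Fin 3, (1:Fin 3) = rho a 0 → a = 1) _ hx
    refine ih (j+1) (i+1) hy1 (fun m hm0 hmlt => ?_) ?_
    · have := hz (m+1) (by omega) (by omega)
      rwa [show i+(m+1) = i+1+m by omega] at this
    · rw [show i+1+(2*k+2) = i+(2*k+3) by omega]
      exact hlast

/-- All `1`s in a column trace occur at times of the same parity. -/
lemma SP (c : ℕ → Fin 3) (j : ℕ) : ∀ d i, zot^[i] c j = 1 → zot^[i+d] c j = 1 → d % 2 = 0 := by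
  intro d
  induction d using Nat.strong_induction_on with
  | _ d ih =>
    intro i h1 h2
    by_contra hodd
    have hd1 : d ≠ 0 := by omega
    rcases Nat.eq_or_lt_of_le (Nat.one_le_iff_ne_zero.mpr hd1) with hd | hd
    · -- d = 1
      have := P1 c j i h1
      rw [show i+1 = i+d by omega] at this
      rw [h2] at this
      exact absurd this (by decide)
    · -- d ≥ 2
      by_cases hmid : ∃ m, 0 < m ∧ m < d ∧ zot^[i+m] c j = 1
      · obtain ⟨m, hm0, hmd, hm1⟩ := hmid
        have e1 := ih m hmd i h1 hm1
        have e2 : (d - m) % 2 = 0 := by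
          refine ih (d-m) (by omega) (i+m) hm1 ?_
          rwa [show i+m+(d-m) = i+d by omega]
        omega
      · push_neg at hmid
        have htwo : zot^[i+1] c j = 2 := P1 c j i h1
        have hzeros : ∀ m, 0 < m → m < d - 1 → zot^[i+1+m] c j = 0 := by
          intro m hm0 hmd
          rcases fin3cases (zot^[i+1+m] c j) with h|h|h
          · exact h
          · exact absurd h (hmid (1+m) (by omega) (by omega)
              (by rwa [show i+(1+m) = i+1+m by omega] : zot^[i+(1+m)] c j = 1) |>.elim)
          · have := P2 c j (i+m) (by rwa [show i+m+1 = i+1+m by omega])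
            rcases Nat.eq_or_lt_of_le hm0 with h1m | h1m
            · rw [show i+m = i+1 by omega, htwo] at this
              exact absurd this (by decide)
            · exact absurd this (hmid m (by omega) (by omega)).elim
        -- pattern 2 0^{d-3} 1 between times i+1 and i+d, inner length d-3? no: distance d-1 = 2k+2
        have hd3 : 3 ≤ d := by omega
        refine P3 c ((d-3)/2) j (i+1) htwo (fun m hm0 hmlt => hzeros m hm0 (by omega)) ?_
        rw [show i+1+(2*((d-3)/2)+2) = i+d by omega]
        exact h2

/-! ### Realization: every "valid" word is a column trace -/

def EvtP (x y : Fin 3) : Prop := (x = 0 ∧ y = 1) ∨ (x = 2 ∧ y = 0)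

instance (x y : Fin 3) : Decidable (EvtP x y) := by unfold EvtP; infer_instance

def Evt (v : ℕ → Fin 3) (p : ℕ) : Prop := EvtP (v p) (v (p+1))

def Valid (v : ℕ → Fin 3) : Prop :=
  (∀ i, pairOK (v i) (v (i+1))) ∧
  ∃ b ≤ 1, (∀ p, Evt v p → p % 2 = b) ∧ (v 0 = 1 → b = 1)

def D3 (p x y : Fin 3) : Fin 3 :=
  if EvtP p x then 2 else if EvtP x y then 1 else 0

def Dstep (v : ℕ → Fin 3) : ℕ → Fin 3 := fun i =>
  match i with
  | 0 => D3 0 (v 0) (v 1)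
  | k+1 => D3 (v k) (v (k+1)) (v (k+2))

def PrevEvt (v : ℕ → Fin 3) : ℕ → Prop := fun i =>
  match i with
  | 0 => v 0 = 1
  | k+1 => Evt v k

lemma Dstep_eq_two_iff (v : ℕ → Fin 3) (i : ℕ) : Dstep v i = 2 ↔ PrevEvt v i := by
  have key : ∀ p x y : Fin 3, D3 p x y = 2 ↔ EvtP p x := by decide
  cases i with
  | zero =>
    show D3 0 (v 0) (v 1) = 2 ↔ v 0 = 1
    rw [key]
    constructor
    · exact fun h => by rcases h with ⟨_,h⟩|⟨h,_⟩ <;> simp_all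
    · exact fun h => Or.inl ⟨rfl, h⟩
  | succ k => exact key _ _ _

lemma Dstep_eq_one_iff (v : ℕ → Fin 3) (hv : Valid v) (i : ℕ) :
    Dstep v i = 1 ↔ Evt v i := by
  obtain ⟨hp, b, hb1, hbe, hb0⟩ := hv
  have key : ∀ p x y : Fin 3, D3 p x y = 1 ↔ (¬ EvtP p x ∧ EvtP x y) := by decide
  have noprev : Evt v i → ¬ PrevEvt v i := by
    intro he hpe
    cases i with
    | zero =>
      have h0 : v 0 = 1 := hpe
      rcases he with ⟨h,_⟩|⟨h,_⟩ <;> rw [h0] at h <;> exact absurd h (by decide)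
    | succ k =>
      have := hbe k hpe
      have := hbe (k+1) he
      omega
  cases i with
  | zero =>
    show D3 0 (v 0) (v 1) = 1 ↔ Evt v 0
    rw [key]
    constructor
    · exact fun h => h.2
    · intro he
      refine ⟨fun hpe => ?_, he⟩
      have h0 : v 0 = 1 := by rcases hpe with ⟨_,h⟩|⟨h,_⟩ <;> simp_all
      exact noprev he h0
  | succ k =>
    show D3 (v k) (v (k+1)) (v (k+2)) = 1 ↔ Evt v (k+1)
    rw [key]
    exact ⟨fun h => h.2, fun he => ⟨noprev he, he⟩⟩

lemma Dstep_valid {v : ℕ → Fin 3} (hv : Valid v) : Valid (Dstep v) := by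
  obtain ⟨hp, b, hb1, hbe, hb0⟩ := hv
  have hv' : Valid v := ⟨hp, b, hb1, hbe, hb0⟩
  have tri : ∀ i, Dstep v i = 0 ∨ Dstep v i = 1 ∨ Dstep v i = 2 := fun i => fin3cases _
  constructor
  · intro i
    rcases tri i with h0 | h1 | h2
    · -- a i = 0 : next ≠ 2
      have : ¬ Evt v i := fun he => by
        have := (Dstep_eq_one_iff v hv' i).mpr he
        rw [h0] at this; exact absurd this (by decide)
      have hsn : Dstep v (i+1) ≠ 2 := fun h => this ((Dstep_eq_two_iff v (i+1)).mp h)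
      rcases tri (i+1) with h | h | h
      · rw [h0, h]; decide
      · rw [h0, h]; decide
      · exact absurd h hsn
    · -- a i = 1 : Evt v i, so next = 2
      have he : Evt v i := (Dstep_eq_one_iff v hv' i).mp h1
      have : Dstep v (i+1) = 2 := (Dstep_eq_two_iff v (i+1)).mpr he
      rw [h1, this]; decide
    · -- a i = 2 : next ≠ 2
      have hpe : PrevEvt v i := (Dstep_eq_two_iff v i).mp h2
      have : ¬ Evt v i := by
        cases i with
        | zero =>
          intro he
          have h0 : v 0 = 1 := hpe
          rcases he with ⟨h,_⟩|⟨h,_⟩ <;> rw [h0] at h <;> exact absurd h (by decide)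
        | succ k =>
          intro he
          have := hbe k hpe
          have := hbe (k+1) he
          omega
      have hsn : Dstep v (i+1) ≠ 2 := fun h => this ((Dstep_eq_two_iff v (i+1)).mp h)
      rcases tri (i+1) with h | h | h
      · rw [h2, h]; decide
      · rw [h2, h]; decide
      · exact absurd h hsn
  · refine ⟨1 - b, by omega, fun p hep => ?_, fun h1 => ?_⟩
    · -- events of Dstep v have parity 1 - b
      rcases hep with ⟨ha, hb'⟩ | ⟨ha, hb'⟩
      · -- (0,1) event: Dstep v (p+1) = 1
        have := (Dstep_eq_one_iff v hv' (p+1)).mpr ?_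
        · have he : Evt v (p+1) := (Dstep_eq_one_iff v hv' (p+1)).mp hb'
          have := hbe (p+1) he
          omega
        · exact (Dstep_eq_one_iff v hv' (p+1)).mp hb'
      · -- (2,0) event at p : Dstep v p = 2
        have hpe : PrevEvt v p := (Dstep_eq_two_iff v p).mp ha
        cases p with
        | zero =>
          have h0 : v 0 = 1 := hpe
          have := hb0 h0
          omega
        | succ k =>
          have := hbe k hpe
          omega
    · -- Dstep v 0 = 1 → 1 - b = 1
      have he : Evt v 0 := (Dstep_eq_one_iff v hv' 0).mp h1
      have := hbe 0 he
      omega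

lemma Dstep_compat {v : ℕ → Fin 3} (hv : Valid v) (i : ℕ) :
    rho (Dstep v i) (v i) = v (i+1) := by
  obtain ⟨hp, b, hb1, hbe, hb0⟩ := hv
  have keyE : ∀ x y : Fin 3, pairOK x y → EvtP x y → rho 1 x = y := by decide
  have keyN : ∀ x y : Fin 3, pairOK x y → ¬ EvtP x y → rho 0 x = y := by decide
  have key1 : ∀ y : Fin 3, pairOK 1 y → y = 2 := by decide
  cases i with
  | zero =>
    show rho (D3 0 (v 0) (v 1)) (v 0) = v 1
    unfold D3
    split_ifs with h1 h2
    · -- prev event: v 0 = 1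
      have h0 : v 0 = 1 := by rcases h1 with ⟨_,h⟩|⟨h,_⟩ <;> simp_all
      rw [h0, key1 (v 1) (by rw [← h0]; exact hp 0)]
      decide
    · exact keyE _ _ (hp 0) h2
    · exact keyN _ _ (hp 0) h2
  | succ k =>
    show rho (D3 (v k) (v (k+1)) (v (k+2))) (v (k+1)) = v (k+2)
    unfold D3
    split_ifs with h1 h2
    · -- prev event at k
      rcases h1 with ⟨hk, hk1⟩ | ⟨hk, hk1⟩
      · -- (0,1) : v (k+1) = 1
        rw [hk1, key1 (v (k+2)) (by rw [← hk1]; exact hp (k+1))]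
        decide
      · -- (2,0) : v (k+1) = 0, need v (k+2) = 0
        have hnotE : ¬ Evt v (k+1) := by
          intro he
          have := hbe k (Or.inr ⟨hk, hk1⟩)
          have := hbe (k+1) he
          omega
        have : v (k+2) = 0 := by
          rcases (hp (k+1)) with h | h
          · rw [hk1] at h; rw [h]; decide
          · rw [hk1] at h
            exfalso; apply hnotE
            exact Or.inl ⟨hk1, by rw [h]; decide⟩
        rw [hk1, this]; decide
    · exact keyE _ _ (hp (k+1)) h2
    · exact keyN _ _ (hp (k+1)) h2

/-- Realization: every valid word is the column-0 trace of some configuration. -/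
lemma realize {v : ℕ → Fin 3} (hv : Valid v) : ∃ c, ∀ i, zot^[i] c 0 = v i := by
  have hviter : ∀ j, Valid (Dstep^[j] v) := by
    intro j
    induction j with
    | zero => exact hv
    | succ j ih => rw [Function.iterate_succ_apply']; exact Dstep_valid ih
  refine ⟨fun j => Dstep^[j] v 0, fun i => ?_⟩
  have key : ∀ i j, zot^[i] (fun j => Dstep^[j] v 0) j = Dstep^[j] v i := by
    intro i
    induction i with
    | zero => intro j; rfl
    | succ i ih =>
      intro j
      rw [zstep, ih, ih]
      rw [Function.iterate_succ_apply']
      exact Dstep_compat (hviter j) i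
  exact key i 0

/-! ### The set of trace words -/

def TS (n t : ℕ) : Set (Fin t → Fin n → Fin 3) :=
  { w | ∃ c, ∀ (i : Fin t) (j : Fin n), w i j = zot^[(i:ℕ)] c (j:ℕ) }

lemma pWords_eq_TS (n t : ℕ) : pWords zot n t = (TS n t).ncard := by
  unfold pWords TS
  congr 1
  ext w
  constructor
  · rintro ⟨e, ⟨c, hc⟩, s, hw⟩
    refine ⟨zot^[s] c, fun i j => ?_⟩
    rw [hw i]
    rw [hc (s + (i:ℕ)) j]
    rw [show s + (i:ℕ) = (i:ℕ) + s by omega, Function.iterate_add_apply]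
  · rintro ⟨c, hc⟩
    refine ⟨fun i j => zot^[i] c (j:ℕ), ⟨c, fun i j => rfl⟩, 0, fun i => ?_⟩
    funext j
    rw [hc i j]
    simp

/-! ### Lower bound -/

def vword (k : ℕ) (β : Fin k → Bool) : ℕ → Fin 3 := fun m =>
  if h : m / 2 < k then
    (if β ⟨m/2, h⟩ then (if m % 2 = 0 then 1 else 2) else 0)
  else 0

lemma vword_valid (k : ℕ) (β : Fin k → Bool) : Valid (vword k β) := by
  have hval_even : ∀ m, m % 2 = 0 → vword k β m = 0 ∨ vword k β m = 1 := by
    intro m hm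
    unfold vword
    split_ifs <;> simp_all
  have hval_odd : ∀ m, m % 2 = 1 → vword k β m = 0 ∨ vword k β m = 2 := by
    intro m hm
    unfold vword
    split_ifs <;> simp_all
  constructor
  · intro i
    rcases Nat.mod_two_eq_zero_or_one i with hi2 | hi2
    · -- i even: same block index
      have hdiv : (i+1)/2 = i/2 := by omega
      have h1 : (i+1) % 2 = 1 := by omega
      unfold vword
      rw [hdiv]
      simp only [hi2, h1]
      norm_num
      split_ifs <;> decide
    · rcases hval_odd i hi2 with h | h <;>
        rcases hval_even (i+1) (by omega) with h' | h' <;>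
        rw [h, h'] <;> decide
  · refine ⟨1, le_refl 1, fun p hp => ?_, fun h1 => rfl⟩
    by_contra hpar
    have hp2 : p % 2 = 0 := by omega
    rcases hp with ⟨ha, hb⟩ | ⟨ha, hb⟩
    · rcases hval_odd (p+1) (by omega) with h | h <;> rw [hb] at h <;> exact absurd h (by decide)
    · rcases hval_even p hp2 with h | h <;> rw [ha] at h <;> exact absurd h (by decide)

lemma lower_bound (n t : ℕ) (hn : 1 ≤ n) : 2 ^ (t/2) ≤ (TS n t).ncard := by
  set k := t / 2
  -- the configurations
  have hreal : ∀ β : Fin k → Bool, ∃ c, ∀ i, zot^[i] c 0 = vword k β i :=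
    fun β => realize (vword_valid k β)
  choose cfg hcfg using hreal
  set G : (Fin k → Bool) → (Fin t → Fin n → Fin 3) :=
    fun β => fun i j => zot^[(i:ℕ)] (cfg β) (j:ℕ) with hG
  have hGmem : ∀ β, G β ∈ TS n t := fun β => ⟨cfg β, fun i j => rfl⟩
  have hGinj : Function.Injective G := by
    intro β β' hββ
    funext s
    by_contra hs
    have h2s : 2 * (s:ℕ) < t := by
      have := s.isLt
      omega
    have := congrFun (congrFun hββ ⟨2*(s:ℕ), h2s⟩) ⟨0, by omega⟩
    simp only [hG] at this
    rw [hcfg β, hcfg β'] at this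
    unfold vword at this
    have hs2 : (2*(s:ℕ)) / 2 = (s:ℕ) := by omega
    have hsm : (2*(s:ℕ)) % 2 = 0 := by omega
    rw [hs2, hsm] at this
    have hlt : (s:ℕ) < k := s.isLt
    rw [dif_pos hlt] at this
    have : (if β ⟨s, hlt⟩ then (1:Fin 3) else 0) = (if β' ⟨s, hlt⟩ then 1 else 0) := by
      simpa using this
    have hfix : (⟨(s:ℕ), hlt⟩ : Fin k) = s := by ext; rfl
    rw [hfix] at this
    cases hb : β s <;> cases hb' : β' s <;> simp_all
  calc (2:ℕ) ^ k = Nat.card (Fin k → Bool) := by simp [Nat.card_eq_fintype_card]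
    _ = Nat.card (Set.range G) := (Nat.card_range_of_injective hGinj).symm
    _ = (Set.range G).ncard := Nat.card_coe_set_eq _
    _ ≤ (TS n t).ncard := Set.ncard_le_ncard (Set.range_subset_iff.mpr hGmem) (TS n t).toFinite

/-! ### Upper bound -/

section Upper

variable (n t : ℕ)

/-- padded last column of a trace word -/
def wcol (hn : 1 ≤ n) (w : Fin t → Fin n → Fin 3) : ℕ → Fin 3 := fun m =>
  if hm : m < t then w ⟨m, hm⟩ ⟨n-1, by omega⟩ else 0

def bnum (hn : 1 ≤ n) (w : Fin t → Fin n → Fin 3) : ℕ :=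
  if h : ∃ m, m < t ∧ wcol n t hn w m = 1 then Nat.find h % 2 else 0

lemma bnum_le (hn : 1 ≤ n) (w : Fin t → Fin n → Fin 3) : bnum n t hn w ≤ 1 := by
  unfold bnum
  split_ifs with h
  · omega
  · omega

noncomputable def enc (hn : 1 ≤ n) (ht : 1 ≤ t) (w : Fin t → Fin n → Fin 3) :
    (Fin n → Fin 3) × Fin 2 × (Fin ((t+1)/2) → Bool) :=
  ⟨w ⟨0, ht⟩, ⟨bnum n t hn w % 2, by omega⟩,
    fun j => decide (wcol n t hn w (2*(j:ℕ) + bnum n t hn w) = 1)⟩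

lemma wcol_ones_parity (hn : 1 ≤ n) {w : Fin t → Fin n → Fin 3}
    (hw : w ∈ TS n t) {m m' : ℕ} (hm : m < t) (hm' : m' < t)
    (h1 : wcol n t hn w m = 1) (h1' : wcol n t hn w m' = 1) : m % 2 = m' % 2 := by
  obtain ⟨c, hc⟩ := hw
  have key : ∀ a, a < t → wcol n t hn w a = zot^[a] c (n-1) := by
    intro a ha
    unfold wcol
    rw [dif_pos ha, hc ⟨a, ha⟩ ⟨n-1, by omega⟩]
  rw [key m hm] at h1
  rw [key m' hm'] at h1'
  rcases le_or_gt m m' with hle | hlt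
  · have := SP c (n-1) (m' - m) m h1 (by rwa [show m + (m'-m) = m' by omega])
    omega
  · have := SP c (n-1) (m - m') m' h1' (by rwa [show m' + (m-m') = m by omega])
    omega

lemma enc_injOn (hn : 1 ≤ n) (ht : 1 ≤ t) : Set.InjOn (enc n t hn ht) (TS n t) := by
  intro w hw w' hw' heq
  -- components
  have h0 : w ⟨0, ht⟩ = w' ⟨0, ht⟩ := congrArg Prod.fst heq
  have hb : bnum n t hn w = bnum n t hn w' := by
    have := congrArg (fun z => (z.2.1 : Fin 2).val) heq
    simp only [enc] at this
    have b1 := bnum_le n t hn w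
    have b2 := bnum_le n t hn w'
    omega
  have hχ : ∀ j : Fin ((t+1)/2),
      (wcol n t hn w (2*(j:ℕ) + bnum n t hn w) = 1) ↔
      (wcol n t hn w' (2*(j:ℕ) + bnum n t hn w') = 1) := by
    intro j
    have := congrArg (fun z => z.2.2 j) heq
    simp only [enc] at this
    rw [← hb] at this ⊢
    constructor <;> intro h
    · have : decide (wcol n t hn w' (2*(j:ℕ) + bnum n t hn w) = 1) = true := by
        rw [← this]; simp [h]
      simpa using this
    · have : decide (wcol n t hn w (2*(j:ℕ) + bnum n t hn w) = 1) = true := by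
        rw [this]; simp [h]
      simpa using this
  -- step A : ones agree
  have key1 : ∀ {u : Fin t → Fin n → Fin 3} {u' : Fin t → Fin n → Fin 3},
      u ∈ TS n t → bnum n t hn u = bnum n t hn u' →
      (∀ j : Fin ((t+1)/2), (wcol n t hn u (2*(j:ℕ) + bnum n t hn u) = 1) ↔
        (wcol n t hn u' (2*(j:ℕ) + bnum n t hn u') = 1)) →
      ∀ m, m < t → wcol n t hn u m = 1 → wcol n t hn u' m = 1 := by
    intro u u' hu hbu hχu m hm h1
    have hex : ∃ a, a < t ∧ wcol n t hn u a = 1 := ⟨m, hm, h1⟩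
    have hbdef : bnum n t hn u = Nat.find hex % 2 := by
      unfold bnum
      rw [dif_pos hex]
    obtain ⟨hflt, hf1⟩ := Nat.find_spec hex
    have hpar : m % 2 = bnum n t hn u := by
      rw [hbdef]
      exact wcol_ones_parity n t hn hu hm hflt h1 hf1
    have hble := bnum_le n t hn u
    have hjlt : m / 2 < (t+1)/2 := by omega
    have hidx : 2 * (m/2) + bnum n t hn u = m := by omega
    have := (hχu ⟨m/2, hjlt⟩)
    simp only at this
    rw [hidx] at this
    rw [← hbu, hidx] at this
    exact this.mp h1
  have hones : ∀ m, m < t → (wcol n t hn w m = 1 ↔ wcol n t hn w' m = 1) := by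
    intro m hm
    exact ⟨key1 hw hb hχ m hm,
      key1 hw' hb.symm (fun j => (hχ j).symm) m hm⟩
  -- trace facts for wcol
  obtain ⟨c, hc⟩ := hw
  obtain ⟨c', hc'⟩ := hw'
  have kcol : ∀ a, (ha : a < t) → wcol n t hn w a = zot^[a] c (n-1) := by
    intro a ha; unfold wcol; rw [dif_pos ha, hc ⟨a, ha⟩ ⟨n-1, by omega⟩]
  have kcol' : ∀ a, (ha : a < t) → wcol n t hn w' a = zot^[a] c' (n-1) := by
    intro a ha; unfold wcol; rw [dif_pos ha, hc' ⟨a, ha⟩ ⟨n-1, by omega⟩]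
  -- step B : columns agree
  have hcols : ∀ m, m < t → wcol n t hn w m = wcol n t hn w' m := by
    have htwo : ∀ m, 0 < m → m < t → wcol n t hn w m = 2 → wcol n t hn w' m = 2 := by
      intro m hm0 hm h2
      have hp2 : wcol n t hn w (m-1) = 1 := by
        rw [kcol (m-1) (by omega)]
        refine P2 c (n-1) (m-1) ?_
        rw [show m-1+1 = m by omega, ← kcol m hm]
        exact h2
      have := (hones (m-1) (by omega)).mp hp2
      rw [kcol' (m-1) (by omega)] at this
      rw [kcol' m hm]
      have := P1 c' (n-1) (m-1) this
      rwa [show m-1+1 = m by omega] at this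
    have htwo' : ∀ m, 0 < m → m < t → wcol n t hn w' m = 2 → wcol n t hn w m = 2 := by
      intro m hm0 hm h2
      have hp2 : wcol n t hn w' (m-1) = 1 := by
        rw [kcol' (m-1) (by omega)]
        refine P2 c' (n-1) (m-1) ?_
        rw [show m-1+1 = m by omega, ← kcol' m hm]
        exact h2
      have := (hones (m-1) (by omega)).mpr hp2
      rw [kcol (m-1) (by omega)] at this
      rw [kcol m hm]
      have := P1 c (n-1) (m-1) this
      rwa [show m-1+1 = m by omega] at this
    intro m hm
    rcases Nat.eq_zero_or_pos m with hm0 | hm0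
    · subst hm0
      unfold wcol
      rw [dif_pos hm, dif_pos hm]
      have : (⟨0, hm⟩ : Fin t) = ⟨0, ht⟩ := rfl
      rw [this, h0]
    · rcases fin3cases (wcol n t hn w m) with h | h | h
      · rcases fin3cases (wcol n t hn w' m) with h' | h' | h'
        · rw [h, h']
        · exact absurd ((hones m hm).mpr h') (by rw [h]; decide)
        · exact absurd (htwo' m hm0 hm h') (by rw [h]; decide)
      · rw [h]
        exact ((hones m hm).mp h).symm
      · rw [h, (htwo m hm0 hm h).symm]
  -- step C : full words agree
  have hrows : ∀ i, (hi : i < t) → ∀ j : Fin n, w ⟨i, hi⟩ j = w' ⟨i, hi⟩ j := by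
    intro i
    induction i with
    | zero =>
      intro hi j
      have : (⟨0, hi⟩ : Fin t) = ⟨0, ht⟩ := rfl
      rw [this, h0]
    | succ i ih =>
      intro hi j
      rcases Nat.lt_or_ge ((j:ℕ)+1) n with hjlt | hjge
      · -- interior column : use the local rule
        rw [hc ⟨i+1, hi⟩ j, hc' ⟨i+1, hi⟩ j]
        rw [zstep c (j:ℕ) i, zstep c' (j:ℕ) i]
        have e1 : zot^[i] c (j:ℕ) = zot^[i] c' (j:ℕ) := by
          have := ih (by omega) j
          rwa [hc ⟨i, by omega⟩ j, hc' ⟨i, by omega⟩ j] at this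
        have e2 : zot^[i] c ((j:ℕ)+1) = zot^[i] c' ((j:ℕ)+1) := by
          have := ih (by omega) ⟨(j:ℕ)+1, hjlt⟩
          rwa [hc ⟨i, by omega⟩ ⟨(j:ℕ)+1, hjlt⟩, hc' ⟨i, by omega⟩ ⟨(j:ℕ)+1, hjlt⟩] at this
        rw [e1, e2]
      · -- last column
        have hj : j = (⟨n-1, by omega⟩ : Fin n) := by
          ext
          have := j.isLt
          simp only
          omega
        have := hcols (i+1) hi
        unfold wcol at this
        rw [dif_pos hi, dif_pos hi] at this
        rw [hj]
        exact this
  funext i j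
  have : i = ⟨(i:ℕ), i.isLt⟩ := by ext; rfl
  rw [this]
  exact hrows (i:ℕ) i.isLt j

lemma upper_bound (hn : 1 ≤ n) (ht : 1 ≤ t) :
    (TS n t).ncard ≤ 3^n * (2 * 2^((t+1)/2)) := by
  have h1 : (TS n t).ncard = ((enc n t hn ht) '' (TS n t)).ncard :=
    (Set.ncard_image_of_injOn (enc_injOn n t hn ht)).symm
  rw [h1]
  have h2 : ((enc n t hn ht) '' (TS n t)).ncard ≤
      (Set.univ : Set ((Fin n → Fin 3) × Fin 2 × (Fin ((t+1)/2) → Bool))).ncard :=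
    Set.ncard_le_ncard (Set.subset_univ _) Set.finite_univ
  refine le_trans h2 ?_
  rw [Set.ncard_univ, Nat.card_eq_fintype_card]
  apply le_of_eq
  simp [Fintype.card_prod, Fintype.card_fun]

end Upper

/-! ### Putting it together -/

lemma pWords_zero (t : ℕ) : pWords zot 0 t = 1 := by
  unfold pWords
  have : { w : Fin t → (Fin 0 → Fin 3) |
      ∃ e ∈ traceSubshift zot 0, ∃ s : ℕ, ∀ i : Fin t, w i = e (s + (i : ℕ)) } = Set.univ := by
    ext w
    simp only [Set.mem_setOf_eq, Set.mem_univ, iff_true]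
    refine ⟨fun i j => zot^[i] (fun _ => 0) (j:ℕ), ⟨fun _ => 0, fun i j => rfl⟩, 0, fun i => ?_⟩
    funext j
    exact j.elim0
  rw [this, Set.ncard_univ, Nat.card_eq_fintype_card]
  simp

/-- The topological entropy of `zot` equals `1/2`: the inner limits
`L n = lim_{t→∞} (1/t)·log₂ p_t(τ_n(zot))` all exist, and `L n → 1/2` as `n → ∞`. -/
theorem zot_entropy_eq_half :
    ∃ L : ℕ → ℝ,
      (∀ n : ℕ, Tendsto (fun t : ℕ => (1 / (t : ℝ)) * Real.logb 2 (pWords zot n t))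
        atTop (nhds (L n))) ∧
      Tendsto L atTop (nhds (1 / 2)) := by
  refine ⟨fun n => if n = 0 then 0 else 1/2, fun n => ?_, ?_⟩
  · rcases Nat.eq_zero_or_pos n with hn0 | hn
    · subst hn0
      simp only [if_pos rfl]
      have : (fun t : ℕ => (1 / (t : ℝ)) * Real.logb 2 (pWords zot 0 t)) = fun _ => 0 := by
        funext t
        rw [pWords_zero t]
        simp
      rw [this]
      exact tendsto_const_nhds
    · have hne : n ≠ 0 := by omega
      have hL : ((fun n => if n = 0 then (0:ℝ) else 1/2) n) = 1/2 := by simp [hne]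
      rw [hL]
      -- bounds
      have hLB : ∀ t : ℕ, 1 ≤ t → (2:ℝ) ^ (t/2 : ℕ) ≤ (pWords zot n t : ℝ) := by
        intro t ht
        rw [pWords_eq_TS]
        exact_mod_cast lower_bound n t hn
      have hUB : ∀ t : ℕ, 1 ≤ t →
          (pWords zot n t : ℝ) ≤ (3:ℝ)^n * (2 * 2^(((t+1)/2 : ℕ))) := by
        intro t ht
        rw [pWords_eq_TS]
        exact_mod_cast upper_bound n t hn ht
      have hpos : ∀ t : ℕ, 1 ≤ t → (0:ℝ) < (pWords zot n t : ℝ) := by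
        intro t ht
        calc (0:ℝ) < (2:ℝ) ^ (t/2 : ℕ) := by positivity
          _ ≤ _ := hLB t ht
      -- squeeze
      have hg : Tendsto (fun t : ℕ => (1:ℝ)/2 - (1/2) * (1/(t:ℝ))) atTop (nhds (1/2)) := by
        have h1 := (tendsto_one_div_atTop_nhds_zero_nat).const_mul (1/2 : ℝ)
        have h2 := (tendsto_const_nhds :
          Tendsto (fun _ : ℕ => (1:ℝ)/2) atTop (nhds (1/2))).sub h1
        simpa using h2
      have hh : Tendsto (fun t : ℕ =>
          ((n:ℝ) * Real.logb 2 3 + 2) * (1/(t:ℝ)) + ((1:ℝ)/2 + (1/2) * (1/(t:ℝ))))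
          atTop (nhds (1/2)) := by
        have h1 := (tendsto_one_div_atTop_nhds_zero_nat).const_mul ((n:ℝ) * Real.logb 2 3 + 2)
        have h2 := (tendsto_one_div_atTop_nhds_zero_nat).const_mul ((1:ℝ)/2)
        have h3 := (tendsto_const_nhds :
          Tendsto (fun _ : ℕ => (1:ℝ)/2) atTop (nhds (1/2))).add h2
        have := h1.add h3
        simpa using this
      refine tendsto_of_tendsto_of_tendsto_of_le_of_le' hg hh ?_ ?_
      · filter_upwards [eventually_ge_atTop 1] with t ht
        have htR : (0:ℝ) < (t:ℝ) := by exact_mod_cast ht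
        have hlogLB : ((t/2 : ℕ) : ℝ) ≤ Real.logb 2 (pWords zot n t) := by
          calc ((t/2 : ℕ) : ℝ) = Real.logb 2 ((2:ℝ) ^ (t/2 : ℕ)) := by
                rw [Real.logb_pow]
                simp
            _ ≤ Real.logb 2 (pWords zot n t) :=
                Real.logb_le_logb_of_le (by norm_num) (by positivity) (hLB t ht)
        have hfloor : ((t:ℝ) - 1) / 2 ≤ ((t/2 : ℕ) : ℝ) := by
          have h1 : t ≤ 2 * (t/2) + 1 := by omega
          have h1' : (t:ℝ) ≤ 2 * ((t/2 : ℕ) : ℝ) + 1 := by exact_mod_cast h1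
          linarith
        have : ((t:ℝ) - 1)/2 ≤ Real.logb 2 (pWords zot n t) := le_trans hfloor hlogLB
        have key : (1:ℝ)/2 - (1/2) * (1/(t:ℝ)) = (1/(t:ℝ)) * (((t:ℝ) - 1)/2) := by
          field_simp
        rw [key]
        exact mul_le_mul_of_nonneg_left this (by positivity)
      · filter_upwards [eventually_ge_atTop 1] with t ht
        have htR : (0:ℝ) < (t:ℝ) := by exact_mod_cast ht
        have hlogUB : Real.logb 2 (pWords zot n t) ≤
            (n:ℝ) * Real.logb 2 3 + ((((t+1)/2 : ℕ) : ℝ) + 1) := by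
          have hmono := Real.logb_le_logb_of_le (b := 2) (by norm_num) (hpos t ht) (hUB t ht)
          refine le_trans hmono (le_of_eq ?_)
          rw [show (3:ℝ)^n * (2 * 2^(((t+1)/2 : ℕ))) = (3:ℝ)^n * 2^((((t+1)/2 : ℕ)) + 1) by ring]
          rw [Real.logb_mul (by positivity) (by positivity), Real.logb_pow, Real.logb_pow]
          have hself : Real.logb 2 2 = 1 := by simp
          rw [hself]
          push_cast
          ring
        have hceil : (((t+1)/2 : ℕ) : ℝ) ≤ ((t:ℝ) + 1) / 2 := by
          have h1 : 2 * ((t+1)/2) ≤ t + 1 := by omega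
          have h1' : 2 * (((t+1)/2 : ℕ) : ℝ) ≤ (t:ℝ) + 1 := by exact_mod_cast h1
          linarith
        have key : ((n:ℝ) * Real.logb 2 3 + 2) * (1/(t:ℝ)) + ((1:ℝ)/2 + (1/2) * (1/(t:ℝ))) =
            (1/(t:ℝ)) * (((n:ℝ) * Real.logb 2 3 + 2) + ((t:ℝ) + 1)/2) := by
          field_simp
        rw [key]
        refine mul_le_mul_of_nonneg_left ?_ (by positivity)
        have hlb3 : (0:ℝ) ≤ Real.logb 2 3 := Real.logb_nonneg (by norm_num) (by norm_num)
        linarith [hlogUB, hceil]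
  · have : ∀ᶠ n : ℕ in atTop, (if n = 0 then (0:ℝ) else 1/2) = 1/2 := by
      filter_upwards [eventually_ge_atTop 1] with n hn
      rw [if_neg (by omega)]
    exact Tendsto.congr' (by filter_upwards [this] with n h; rw [h]) tendsto_const_nhds
end

section
/- Let A = {0,1,2} and for each n ≥ 1 define ρ : A^n → A^n by ρ(a_0 a_1 ⋯ a_{n−1}) = ρ_{a_1}(a_0) ρ_{a_2}(a_1) ⋯ ρ_{a_{n−1}}(a_{n−2}) ρ_1(a_{n−1}). Then for every n ≥ 1 the map ρ : A^n → A^n is a cyclic permutation of A^n, i.e. a bijection whose cycle decomposition consists of a single cycle of length 3^n (equivalently, for every x ∈ A^n the orbit {ρ^i(x) : 0 ≤ i < 3^n} is all of A^n). -/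
/-- The map `ρ : A^n → A^n` on words over `A = {0,1,2}`:
`ρ(a_0 a_1 ⋯ a_{n−1}) = ρ_{a_1}(a_0) ρ_{a_2}(a_1) ⋯ ρ_{a_{n−1}}(a_{n−2}) ρ_1(a_{n−1})`. -/
def rhoWord (n : ℕ) (a : Fin n → Fin 3) : Fin n → Fin 3 :=
  fun i => if h : (i : ℕ) + 1 < n then rho (a ⟨(i : ℕ) + 1, h⟩) (a i) else rho 1 (a i)

namespace RhoAux

abbrev Z3 := ZMod 3

def F3 (h x : Z3) : Z3 := if h = 1 then x + 1 else -x
def sg (h : Z3) : Z3 := if h = 1 then 1 else -1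

def H : ℕ → ℕ → Z3
  | 0, _ => 1
  | _+1, 0 => 0
  | m+1, t+1 => F3 (H m t) (H (m+1) t)

def Sq (m : ℕ) : ℕ → Z3
  | 0 => 1
  | t+1 => Sq m t * sg (H m t)

def Wp (m a : ℕ) : ℕ → Z3
  | 0 => 1
  | b+1 => Wp m a b * sg (H m (a + b))

lemma H0_eq (t : ℕ) : H 0 t = 1 := by cases t <;> rfl
lemma H_zero (m : ℕ) : H (m+1) 0 = 0 := rfl
lemma H_succ (m t : ℕ) : H (m+1) (t+1) = F3 (H m t) (H (m+1) t) := rfl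
lemma Sq_zero (m : ℕ) : Sq m 0 = 1 := rfl
lemma Sq_succ (m t : ℕ) : Sq m (t+1) = Sq m t * sg (H m t) := rfl
lemma Wp_zero (m a : ℕ) : Wp m a 0 = 1 := rfl
lemma Wp_succ (m a b : ℕ) : Wp m a (b+1) = Wp m a b * sg (H m (a + b)) := rfl

lemma F3add (h x u : Z3) : F3 h (x + u) = F3 h x + u * sg h := by
  unfold F3 sg; split <;> ring

lemma sg_pm (h : Z3) : sg h = 1 ∨ sg h = -1 := by unfold sg; split <;> simp

lemma pm_mul {a b : Z3} (ha : a = 1 ∨ a = -1) (hb : b = 1 ∨ b = -1) : a*b = 1 ∨ a*b = -1 := by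
  rcases ha with h|h <;> rcases hb with h'|h' <;> rw [h,h'] <;> norm_num

lemma Sq_pm (m t : ℕ) : Sq m t = 1 ∨ Sq m t = -1 := by
  induction t with
  | zero => left; rfl
  | succ t ih => rw [Sq_succ]; exact pm_mul ih (sg_pm _)

lemma Sq_split (m c : ℕ) (hper : ∀ i, H m (i + c) = H m i) :
    ∀ t, Sq m (t + c) = Sq m c * Sq m t := by
  intro t
  induction t with
  | zero => simp [Sq_zero]
  | succ t ih =>
    rw [show t + 1 + c = (t + c) + 1 by omega, Sq_succ, ih, hper, Sq_succ]
    ring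

lemma SqWp (m a : ℕ) : ∀ b, Sq m (a + b) = Sq m a * Wp m a b := by
  intro b
  induction b with
  | zero => simp [Wp_zero]
  | succ b ih =>
    rw [show a + (b+1) = (a+b)+1 by omega, Sq_succ, ih, Wp_succ]
    ring

lemma triple3 : ∀ x u : Z3, (u = 1 ∨ u = -1) → sg x * sg (x+u) * sg (x+u+u) = 1 := by decide

lemma blockLemma (m P : ℕ) (b : Z3) (hper : ∀ t, H m (t + P) = H m t)
    (hB : H (m+1) P = b) (hS : Sq m P = 1) :
    ∀ k t, H (m+1) (t + k * P) = H (m+1) t + (k : Z3) * b * Sq m t := by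
  have sper : ∀ t, Sq m (t + P) = Sq m t := by
    intro t; rw [Sq_split m P hper, hS, one_mul]
  have sperK : ∀ k t, Sq m (t + k * P) = Sq m t := by
    intro k
    induction k with
    | zero => intro t; simp
    | succ k ih =>
      intro t
      rw [show t + (k+1) * P = (t + k * P) + P by ring, sper, ih]
  have one : ∀ t, H (m+1) (t + P) = H (m+1) t + b * Sq m t := by
    intro t
    induction t with
    | zero => rw [show (0:ℕ) + P = P by omega, hB, H_zero, Sq_zero]; ring
    | succ t ih =>
      rw [show t + 1 + P = (t + P) + 1 by omega, H_succ, hper, ih, F3add, H_succ, Sq_succ]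
      ring
  intro k
  induction k with
  | zero => intro t; simp
  | succ k ih =>
    intro t
    rw [show t + (k+1) * P = (t + k * P) + P by ring, one, ih, sperK]
    push_cast
    ring

def cval (e s : Z3) : Z3 := if e = 0 then -s else s
def MX (em e s S1 j : Z3) : Z3 := -em * (cval e s * (j-1)^2 + 2*(S1 - cval e s))

def good (em d e s : Z3) : Prop :=
  if em = 1 then
    (d,e,s) ∈ ([(0,0,1),(0,0,-1),(0,1,1),(0,2,-1),(1,0,1),(1,2,-1),(2,0,-1),(2,1,1)] : List (Z3×Z3×Z3))
  else
    (d,e,s) ∈ ([(0,0,1),(0,0,-1),(0,1,-1),(0,2,1),(1,0,-1),(1,2,1),(2,0,1),(2,1,-1)] : List (Z3×Z3×Z3))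
instance (em d e s : Z3) : Decidable (good em d e s) := by unfold good; infer_instance

def emv (m : ℕ) : Z3 := (-1)^m
lemma emv_pm (m : ℕ) : emv m = 1 ∨ emv m = -1 := by
  unfold emv
  induction m with
  | zero => left; rfl
  | succ m ih => rcases ih with h|h <;> rw [pow_succ, h] <;> norm_num
lemma emv_succ (m : ℕ) : emv (m+1) = -(emv m) := by unfold emv; rw [pow_succ]; ring

set_option maxHeartbeats 2000000 in
lemma goodStep : ∀ em d e s S1 j : Z3, (em = 1 ∨ em = -1) → good em d e s →
    (S1 = 1 ∨ S1 = -1) →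
    good (-em) (e + j*em*s) (MX em e s S1 j) S1 := by decide

set_option maxHeartbeats 4000000 in
lemma stepLemma : ∀ em d e s S1 S2 j k : Z3, (em = 1 ∨ em = -1) → good em d e s →
    (S1 = 1 ∨ S1 = -1) → (S2 = 1 ∨ S2 = -1) →
    MX (-em) (MX em (F3 d e) (s * sg d) (S1 * sg (e + j*em*s)) j) (S1 * sg (e + j*em*s))
       (S2 * sg (MX em e s S1 j + k*(-em)*S1)) k
      = F3 (MX em e s S1 j + k*(-em)*S1) (MX (-em) (MX em e s S1 j) S1 S2 k) := by decide

set_option maxHeartbeats 4000000 in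
lemma wrapLemma1 : ∀ em S1 S2 j k : Z3, (em = 1 ∨ em = -1) →
    (S1 = 1 ∨ S1 = -1) → (S2 = 1 ∨ S2 = -1) → j ≠ 2 →
    MX (-em) (MX em 0 1 (S1 * sg (-em + j*em*(-1))) (j+1)) (S1 * sg (-em + j*em*(-1)))
       (S2 * sg (MX em (-em) (-1) S1 j + k*(-em)*S1)) k
      = F3 (MX em (-em) (-1) S1 j + k*(-em)*S1) (MX (-em) (MX em (-em) (-1) S1 j) S1 S2 k) := by decide

set_option maxHeartbeats 4000000 in
lemma wrapLemma2 : ∀ em S1 S2 k : Z3, (em = 1 ∨ em = -1) →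
    (S1 = 1 ∨ S1 = -1) → (S2 = 1 ∨ S2 = -1) → k ≠ 2 →
    MX (-em) 0 1 (S2 * sg (MX em (-em) (-1) S1 2 + k*(-em)*S1)) (k+1)
      = F3 (MX em (-em) (-1) S1 2 + k*(-em)*S1) (MX (-em) (MX em (-em) (-1) S1 2) S1 S2 k) := by decide

def Pack (m : ℕ) : Prop :=
  (∀ t, H m (t + 3^m) = H m t) ∧
  (Sq m (3^m) = 1) ∧
  (∀ k t, H (m+1) (t + k * 3^m) = H (m+1) t + (k : Z3) * emv m * Sq m t) ∧
  (∀ t₀, t₀ < 3^m → good (emv m) (H m t₀) (H (m+1) t₀) (Sq m t₀)) ∧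
  (Sq m (3^m - 1) = -1) ∧
  (H (m+1) (3^m - 1) = - emv m) ∧
  (∀ t, t < 3^(m+1) →
     H (m+2) t = MX (emv m) (H (m+1) (t % 3^m)) (Sq m (t % 3^m)) (Sq (m+1) t) ((t / 3^m : ℕ) : Z3))

lemma H1_eq (t : ℕ) : H 1 t = (t : Z3) := by
  induction t with
  | zero => rfl
  | succ t ih =>
    rw [show H 1 (t+1) = F3 (H 0 t) (H 1 t) from rfl, H0_eq, ih]
    simp only [F3, if_pos rfl]
    push_cast
    ring

set_option maxHeartbeats 1000000 in
lemma pack_one : Pack 1 := by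
  have hper : ∀ t, H 1 (t + 3^1) = H 1 t := by
    intro t
    rw [H1_eq, H1_eq]
    push_cast
    rw [show (3:Z3) = 0 by decide]
    ring
  refine ⟨hper, by decide, ?_, ?_, by decide, by decide, ?_⟩
  · have hbl := blockLemma 1 (3^1) (-1) hper (by decide) (by decide)
    intro k t
    rw [hbl k t, show emv 1 = -1 by decide]
  · intro t₀ h
    interval_cases t₀ <;> decide
  · intro t h
    interval_cases t <;> decide

set_option maxHeartbeats 3200000 in
lemma pack_step (m : ℕ) (pm : Pack m) : Pack (m+1) := by
  obtain ⟨h1, h2, h3, h4, h5, h6, h7⟩ := pm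
  have hem := emv_pm m
  have hPpos : 0 < 3^m := pow_pos (by norm_num) m
  have hP1pos : 0 < 3^(m+1) := pow_pos (by norm_num) (m+1)
  -- (1') periodicity of H (m+1)
  have per1 : ∀ t, H (m+1) (t + 3^(m+1)) = H (m+1) t := by
    intro t
    have h := h3 3 t
    rw [show 3 * 3^m = 3^(m+1) by rw [pow_succ]; ring] at h
    rw [h, show ((3:ℕ):Z3) = 0 by decide]
    ring
  -- (2') total sign product at level m+1
  have tripleW : ∀ b, Wp (m+1) 0 b * Wp (m+1) (3^m) b * Wp (m+1) (2*3^m) b = 1 := by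
    intro b
    induction b with
    | zero => simp [Wp_zero]
    | succ b ih =>
      rw [Wp_succ, Wp_succ, Wp_succ]
      have e1 : H (m+1) (3^m + b) = H (m+1) b + emv m * Sq m b := by
        have h := h3 1 b
        rw [show b + 1 * 3^m = 3^m + b by ring] at h
        rw [h]; push_cast; ring
      have e2 : H (m+1) (2*3^m + b) = H (m+1) b + emv m * Sq m b + emv m * Sq m b := by
        have h := h3 2 b
        rw [show b + 2 * 3^m = 2*3^m + b by ring] at h
        rw [h, show ((2:ℕ):Z3) = 2 by decide]; ring
      have hu : emv m * Sq m b = 1 ∨ emv m * Sq m b = -1 := pm_mul hem (Sq_pm m b)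
      have t3 := triple3 (H (m+1) (0 + b)) (emv m * Sq m b) hu
      rw [show (0:ℕ) + b = b by omega] at t3 ⊢
      calc Wp (m+1) 0 b * sg (H (m+1) b) * (Wp (m+1) (3^m) b * sg (H (m+1) (3^m + b))) *
             (Wp (m+1) (2*3^m) b * sg (H (m+1) (2*3^m + b)))
          = (Wp (m+1) 0 b * Wp (m+1) (3^m) b * Wp (m+1) (2*3^m) b) *
             (sg (H (m+1) b) * sg (H (m+1) (3^m + b)) * sg (H (m+1) (2*3^m + b))) := by ring
        _ = 1 := by rw [ih, e1, e2, one_mul]; exact t3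
  have S1per : Sq (m+1) (3^(m+1)) = 1 := by
    have d1 : Sq (m+1) (3^m) = Wp (m+1) 0 (3^m) := by
      have hh := SqWp (m+1) 0 (3^m)
      rw [show (0:ℕ) + 3^m = 3^m by omega] at hh
      rw [hh, Sq_zero, one_mul]
    have d2 : Sq (m+1) (2*3^m) = Sq (m+1) (3^m) * Wp (m+1) (3^m) (3^m) := by
      have hh := SqWp (m+1) (3^m) (3^m)
      rwa [show 3^m + 3^m = 2*3^m by ring] at hh
    have d3 : Sq (m+1) (3^(m+1)) = Sq (m+1) (2*3^m) * Wp (m+1) (2*3^m) (3^m) := by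
      have hh := SqWp (m+1) (2*3^m) (3^m)
      rwa [show 2*3^m + 3^m = 3^(m+1) by rw [pow_succ]; ring] at hh
    rw [d3, d2, d1, ← tripleW (3^m)]
  have sper1 : ∀ t, Sq (m+1) (t + 3^(m+1)) = Sq (m+1) t := by
    intro t; rw [Sq_split (m+1) _ per1, S1per, one_mul]
  have sperK1 : ∀ k t, Sq (m+1) (t + k * 3^(m+1)) = Sq (m+1) t := by
    intro k
    induction k with
    | zero => intro t; simp
    | succ k ih =>
      intro t
      rw [show t + (k+1) * 3^(m+1) = (t + k * 3^(m+1)) + 3^(m+1) by ring, sper1, ih]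
  -- edge values at q = 3^(m+1) - 1
  have hq : 3^(m+1) - 1 + 1 = 3^(m+1) := by omega
  have qdec : 3^(m+1) - 1 = (3^m - 1) + 2 * 3^m := by
    have : 3^(m+1) = 3 * 3^m := by rw [pow_succ]; ring
    omega
  have eq1 : H (m+1) (3^(m+1) - 1) = 0 := by
    rw [qdec]
    have h := h3 2 (3^m - 1)
    rw [h, h5, h6, show ((2:ℕ):Z3) = 2 by decide]
    rcases hem with h'|h' <;> rw [h'] <;> decide
  have eq2 : Sq (m+1) (3^(m+1) - 1) = -1 := by
    have hs : Sq (m+1) (3^(m+1) - 1 + 1) = Sq (m+1) (3^(m+1) - 1) * sg (H (m+1) (3^(m+1) - 1)) :=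
      Sq_succ _ _
    rw [hq, S1per, eq1, show sg (0:Z3) = -1 by decide] at hs
    linear_combination hs
  have eq3 : H (m+2) (3^(m+1) - 1) = emv m := by
    have hlt : 3^(m+1) - 1 < 3^(m+1) := by omega
    have h := h7 (3^(m+1) - 1) hlt
    have m1 : (3^(m+1) - 1) % 3^m = 3^m - 1 := by
      rw [qdec, Nat.add_mul_mod_self_right, Nat.mod_eq_of_lt (by omega)]
    have d1 : (3^(m+1) - 1) / 3^m = 2 := by
      rw [qdec, Nat.add_mul_div_right _ _ hPpos, Nat.div_eq_of_lt (by omega)]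
    rw [m1, d1, h5, h6, eq2] at h
    rw [h]
    rcases hem with h'|h' <;> rw [h'] <;> decide
  have B1 : H (m+2) (3^(m+1)) = emv (m+1) := by
    rw [← hq, H_succ, eq1, eq3, emv_succ]
    rcases hem with h'|h' <;> rw [h'] <;> decide
  have h3' : ∀ k t, H (m+2) (t + k * 3^(m+1)) = H (m+2) t + (k:Z3) * emv (m+1) * Sq (m+1) t :=
    blockLemma (m+1) (3^(m+1)) (emv (m+1)) per1 B1 S1per
  -- (4') good at level m+1
  have h4' : ∀ t₁, t₁ < 3^(m+1) → good (emv (m+1)) (H (m+1) t₁) (H (m+2) t₁) (Sq (m+1) t₁) := by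
    intro t₁ ht₁
    have ht₀ : t₁ % 3^m < 3^m := Nat.mod_lt _ hPpos
    have e1 : H (m+1) t₁ = H (m+1) (t₁ % 3^m) + ((t₁ / 3^m : ℕ):Z3) * emv m * Sq m (t₁ % 3^m) := by
      conv_lhs => rw [show t₁ = t₁ % 3^m + (t₁ / 3^m) * 3^m by
        rw [Nat.mul_comm]; exact (Nat.mod_add_div t₁ (3^m)).symm]
      exact h3 _ _
    have e2 := h7 t₁ ht₁
    rw [e1, e2, emv_succ]
    exact goodStep (emv m) (H m (t₁ % 3^m)) _ _ _ _ hem (h4 _ ht₀) (Sq_pm _ _)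
  refine ⟨per1, S1per, h3', h4', eq2, ?_, ?_⟩
  · rw [eq3, emv_succ]; ring
  · -- MST (m+1)
    intro t
    induction t with
    | zero =>
      intro _
      rw [Nat.zero_mod, Nat.zero_div, H_zero, H_zero, Sq_zero, Sq_zero]
      rcases emv_pm (m+1) with h'|h' <;> rw [h'] <;> decide
    | succ t ih =>
      intro hlt
      have hlt' : t < 3^(m+2) := Nat.lt_of_succ_lt hlt
      have IH := ih hlt'
      simp only [show m+1+1 = m+2 from rfl, show m+1+2 = m+3 from rfl] at IH ⊢
      -- decomposition of t
      set t₀ := t % 3^m with ht₀def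
      set r := t / 3^m with hrdef
      set j := r % 3 with hjdef
      set k := r / 3 with hkdef
      set t₁ := t % 3^(m+1) with ht₁def
      have hP1 : 3^(m+1) = 3^m * 3 := by rw [pow_succ]
      have hP2 : 3^(m+2) = 3^m * 9 := by rw [pow_succ, pow_succ]; ring
      have ht₀lt : t₀ < 3^m := Nat.mod_lt _ hPpos
      have hj3 : j < 3 := Nat.mod_lt _ (by norm_num)
      have hr9 : r < 9 := by
        rw [hrdef]
        exact Nat.div_lt_of_lt_mul (by rw [← hP2]; omega)
      have hk3 : k < 3 := by rw [hkdef]; omega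
      have hF1 : t = t₀ + 3^m * r := (Nat.mod_add_div t (3^m)).symm
      have hF2 : r = j + 3 * k := (Nat.mod_add_div r 3).symm
      have hPj : 3^m * j ≤ 3^m * 2 := Nat.mul_le_mul_left _ (by omega)
      have ht₁eq : t₁ = t₀ + 3^m * j := by
        rw [ht₁def, hP1, show t = (t₀ + 3^m * j) + (3^m * 3) * k by rw [hF1, hF2]; ring,
          Nat.add_mul_mod_self_left, Nat.mod_eq_of_lt (by omega)]
      have ht₁lt : t₁ < 3^(m+1) := Nat.mod_lt _ hP1pos
      have htdiv : t / 3^(m+1) = k := by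
        rw [hP1, ← Nat.div_div_eq_div_mul, ← hrdef, ← hkdef]
      have hmc : 3^(m+1) * k = k * 3^(m+1) := Nat.mul_comm _ _
      have hteq : t = t₁ + 3^(m+1) * k := by
        have h := Nat.mod_add_div t (3^(m+1))
        rw [htdiv] at h
        rw [ht₁def]; omega
      have hteq' : t = t₁ + k * 3^(m+1) := by omega
      -- real-value identities at time t
      have m2 : t₁ % 3^m = t₀ := by
        rw [ht₁eq, Nat.add_mul_mod_self_left, Nat.mod_eq_of_lt ht₀lt]
      have d2 : t₁ / 3^m = j := by
        rw [ht₁eq, Nat.add_mul_div_left _ _ hPpos, Nat.div_eq_of_lt ht₀lt]; omega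
      have hH1t₁ : H (m+1) t₁ = H (m+1) t₀ + (j:Z3) * emv m * Sq m t₀ := by
        conv_lhs => rw [ht₁eq, show t₀ + 3^m * j = t₀ + j * 3^m by ring]
        exact h3 j t₀
      have hH2t₁ : H (m+2) t₁ = MX (emv m) (H (m+1) t₀) (Sq m t₀) (Sq (m+1) t₁) (j:Z3) := by
        have h := h7 t₁ ht₁lt
        rwa [m2, d2] at h
      have hH2t : H (m+2) t
          = MX (emv m) (H (m+1) t₀) (Sq m t₀) (Sq (m+1) t₁) (j:Z3) + (k:Z3) * -(emv m) * Sq (m+1) t₁ := by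
        conv_lhs => rw [hteq']
        rw [h3' k t₁, hH2t₁, emv_succ]
      have hS1pm := Sq_pm (m+1) t₁
      have hS2pm := Sq_pm (m+2) t
      rw [htdiv] at IH
      -- case split on wrap
      by_cases hwrap : t₀ + 1 < 3^m
      · -- no wrap
        have hsplit : t + 1 = (t₁ + 1) + 3^(m+1) * k := by omega
        have ht₁1lt : t₁ + 1 < 3^(m+1) := by rw [ht₁eq, hP1]; omega
        have hm2' : (t+1) % 3^(m+1) = t₁ + 1 := by
          rw [hsplit, Nat.add_mul_mod_self_left, Nat.mod_eq_of_lt ht₁1lt]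
        have hd2' : (t+1) / 3^(m+1) = k := by
          rw [hsplit, Nat.add_mul_div_left _ _ hP1pos, Nat.div_eq_of_lt ht₁1lt]; omega
        have hm2'' : (t₁+1) % 3^m = t₀ + 1 := by
          rw [ht₁eq, show t₀ + 3^m * j + 1 = (t₀ + 1) + 3^m * j by ring,
            Nat.add_mul_mod_self_left, Nat.mod_eq_of_lt hwrap]
        have hd2'' : (t₁+1) / 3^m = j := by
          rw [ht₁eq, show t₀ + 3^m * j + 1 = (t₀ + 1) + 3^m * j by ring,
            Nat.add_mul_div_left _ _ hPpos, Nat.div_eq_of_lt hwrap]; omega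
        have h7' : H (m+2) (t₁+1)
            = MX (emv m) (F3 (H m t₀) (H (m+1) t₀)) (Sq m t₀ * sg (H m t₀))
                (Sq (m+1) t₁ * sg (H (m+1) t₀ + (j:Z3) * emv m * Sq m t₀)) (j:Z3) := by
          have h := h7 (t₁+1) ht₁1lt
          rwa [hm2'', hd2'', H_succ m t₀, Sq_succ m t₀, Sq_succ (m+1) t₁, hH1t₁] at h
        rw [hm2', hd2', H_succ (m+2) t, IH, hH2t₁, h7', Sq_succ (m+1) t₁, hH1t₁,
          Sq_succ (m+2) t, hH2t, emv_succ]
        exact (stepLemma (emv m) (H m t₀) (H (m+1) t₀) (Sq m t₀) (Sq (m+1) t₁) (Sq (m+2) t)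
          (j:Z3) (k:Z3) hem (h4 t₀ ht₀lt) hS1pm hS2pm).symm
      · -- wrap: t₀ + 1 = 3^m
        have ht₀P : t₀ = 3^m - 1 := by omega
        have he : H (m+1) t₀ = -(emv m) := by rw [ht₀P]; exact h6
        have hsq : Sq m t₀ = -1 := by rw [ht₀P]; exact h5
        by_cases hj2 : j < 2
        · -- inner wrap only
          have ht₁1 : t₁ + 1 = 3^m * (j+1) := by
            rw [ht₁eq, Nat.mul_add, Nat.mul_one]; omega
          have ht₁1lt : t₁ + 1 < 3^(m+1) := by
            rw [ht₁1, hP1]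
            exact (Nat.mul_lt_mul_left hPpos).mpr (by omega)
          have hsplit : t + 1 = (t₁ + 1) + 3^(m+1) * k := by omega
          have hm2' : (t+1) % 3^(m+1) = t₁ + 1 := by
            rw [hsplit, Nat.add_mul_mod_self_left, Nat.mod_eq_of_lt ht₁1lt]
          have hd2' : (t+1) / 3^(m+1) = k := by
            rw [hsplit, Nat.add_mul_div_left _ _ hP1pos, Nat.div_eq_of_lt ht₁1lt]; omega
          have hm2'' : (t₁+1) % 3^m = 0 := by rw [ht₁1, Nat.mul_mod_right]
          have hd2'' : (t₁+1) / 3^m = j + 1 := by rw [ht₁1, Nat.mul_div_cancel_left _ hPpos]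
          have h7' : H (m+2) (t₁+1)
              = MX (emv m) 0 1 (Sq (m+1) t₁ * sg (H (m+1) t₀ + (j:Z3) * emv m * Sq m t₀))
                  ((j:Z3)+1) := by
            have h := h7 (t₁+1) ht₁1lt
            rwa [hm2'', hd2'', H_zero, Sq_zero, Sq_succ (m+1) t₁, hH1t₁, Nat.cast_add,
              Nat.cast_one] at h
          have hjcast : (j:Z3) ≠ 2 := by
            interval_cases j <;> decide
          rw [hm2', hd2', H_succ (m+2) t, IH, hH2t₁, h7', Sq_succ (m+1) t₁, hH1t₁,
            Sq_succ (m+2) t, hH2t, emv_succ, he, hsq]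
          exact (wrapLemma1 (emv m) (Sq (m+1) t₁) (Sq (m+2) t) (j:Z3) (k:Z3)
            hem hS1pm hS2pm hjcast).symm
        · -- outer wrap : j = 2
          have hj2' : j = 2 := by omega
          have ht₁1 : t₁ + 1 = 3^(m+1) := by
            rw [ht₁eq, ht₀P, hj2', hP1]; omega
          have hsum : t + 1 = 3^(m+1) * (k + 1) := by
            rw [Nat.mul_add, Nat.mul_one]; omega
          have hkk : k < 2 := by
            rcases Nat.lt_or_ge k 2 with h | h
            · exact h
            · exfalso
              have hk2 : k = 2 := by omega
              have h9 : 3^(m+1) * (k+1) = 3^(m+2) := by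
                rw [hk2, hP1, hP2]; ring
              rw [hsum, h9] at hlt
              simp only [show m+1+1 = m+2 from rfl] at hlt
              omega
          have hm2' : (t+1) % 3^(m+1) = 0 := by rw [hsum, Nat.mul_mod_right]
          have hd2' : (t+1) / 3^(m+1) = k + 1 := by
            rw [hsum, Nat.mul_div_cancel_left _ hP1pos]
          have hkcast : (k:Z3) ≠ 2 := by
            interval_cases k <;> decide
          have hjc : ((j:ℕ):Z3) = 2 := by rw [hj2']; decide
          rw [hm2', hd2', H_succ (m+2) t, IH, hH2t₁, H_zero, Sq_zero,
            Sq_succ (m+2) t, hH2t, emv_succ, he, hsq, hjc, Nat.cast_add, Nat.cast_one]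
          exact (wrapLemma2 (emv m) (Sq (m+1) t₁) (Sq (m+2) t) (k:Z3)
            hem hS1pm hS2pm hkcast).symm

lemma pack_all : ∀ m, 1 ≤ m → Pack m := by
  intro m hm
  induction m with
  | zero => omega
  | succ m ih =>
    rcases Nat.eq_or_lt_of_le hm with h | h
    · rw [← h]; exact pack_one
    · exact pack_step m (ih (by omega))

lemma rho_F3 : ∀ a x : Fin 3, (((rho a x) : Fin 3).val : Z3) = F3 ((a.val : ℕ) : Z3) ((x.val : ℕ) : Z3) := by
  decide

lemma val_cast_inj : ∀ v w : Fin 3, ((v.val : ℕ) : Z3) = ((w.val : ℕ) : Z3) → v = w := by decide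

lemma rhoWord_apply (n : ℕ) (a : Fin n → Fin 3) (i : Fin n) :
    rhoWord n a i = if h : (i : ℕ) + 1 < n then rho (a ⟨(i : ℕ) + 1, h⟩) (a i) else rho 1 (a i) :=
  rfl

lemma orbit_coord (n : ℕ) : ∀ t (i : Fin n),
    ((((rhoWord n)^[t] (fun _ => 0)) i).val : Z3) = H (n - (i : ℕ)) t := by
  intro t
  induction t with
  | zero =>
    intro i
    obtain ⟨m, hm⟩ : ∃ m, n - (i : ℕ) = m + 1 := ⟨n - (i:ℕ) - 1, by omega⟩
    rw [Function.iterate_zero_apply, hm, H_zero]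
    rfl
  | succ t ih =>
    intro i
    rw [Function.iterate_succ_apply', rhoWord_apply]
    by_cases h : (i : ℕ) + 1 < n
    · rw [dif_pos h, rho_F3, ih i, ih ⟨(i:ℕ)+1, h⟩]
      obtain ⟨m, hm⟩ : ∃ m, n - (i : ℕ) = m + 1 := ⟨n - (i:ℕ) - 1, by omega⟩
      have hm2 : n - ((⟨(i:ℕ)+1, h⟩ : Fin n) : ℕ) = m := by
        rw [show ((⟨(i:ℕ)+1, h⟩ : Fin n) : ℕ) = (i:ℕ)+1 from rfl]; omega
      rw [hm, hm2, H_succ]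
    · rw [dif_neg h, rho_F3, ih i]
      have hm : n - (i : ℕ) = 1 := by have := i.isLt; omega
      rw [hm, show (((1:Fin 3).val : ℕ) : Z3) = 1 by decide,
        show H 1 (t+1) = F3 (H 0 t) (H 1 t) from rfl, H0_eq]

lemma H_periodMul (m : ℕ) (hm : 1 ≤ m) : ∀ q t, H m (t + q * 3^m) = H m t := by
  have hper := (pack_all m hm).1
  intro q
  induction q with
  | zero => intro t; simp
  | succ q ih =>
    intro t
    rw [show t + (q+1) * 3^m = (t + q * 3^m) + 3^m by ring, hper, ih]

lemma orbit_period (n : ℕ) : (rhoWord n)^[3^n] (fun _ => 0) = (fun _ => (0:Fin 3)) := by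
  funext i
  apply val_cast_inj
  rw [orbit_coord]
  set m := n - (i : ℕ) with hmdef
  have hm1 : 1 ≤ m := by have := i.isLt; omega
  have hmn : m ≤ n := by omega
  have hsplit : 3^n = 0 + 3^(n - m) * 3^m := by
    rw [Nat.zero_add, ← pow_add]
    congr 1
    omega
  rw [hsplit, H_periodMul m hm1]
  obtain ⟨mm, hmm⟩ : ∃ mm, m = mm + 1 := ⟨m - 1, by omega⟩
  rw [hmm, H_zero]
  rfl

lemma orbit_nontriv (n : ℕ) (hn : 1 ≤ n) :
    (rhoWord n)^[3^(n-1)] (fun _ => 0) ≠ (fun _ => (0:Fin 3)) := by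
  obtain ⟨mm, rfl⟩ : ∃ mm, n = mm + 1 := ⟨n - 1, by omega⟩
  intro hcon
  have h0 := congrFun hcon ⟨0, by omega⟩
  have h1 : ((((rhoWord (mm+1))^[3^(mm+1-1)] (fun _ => 0)) (⟨0, by omega⟩ : Fin (mm+1))).val : Z3)
      = (((0:Fin 3)).val : Z3) := by rw [h0]
  rw [orbit_coord] at h1
  have hni : mm + 1 - ((⟨0, by omega⟩ : Fin (mm+1)) : ℕ) = mm + 1 := by simp
  rw [hni, show mm + 1 - 1 = mm by omega] at h1
  have hz : (((0:Fin 3)).val : Z3) = 0 := rfl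
  rw [hz] at h1
  -- h1 : H (mm+1) (3^mm) = 0
  rcases Nat.eq_zero_or_pos mm with h | h
  · subst h
    rw [show (3:ℕ)^0 = 1 by norm_num, show H 1 1 = 1 by decide] at h1
    exact one_ne_zero h1
  · have hpk := (pack_all mm h).2.2.1
    have hval := hpk 1 0
    rw [show (0:ℕ) + 1 * 3^mm = 3^mm by ring, H_zero, Sq_zero] at hval
    rw [hval] at h1
    rcases emv_pm mm with h' | h' <;> rw [h'] at h1 <;>
      simp only [Nat.cast_one, one_mul, mul_one] at h1 <;> revert h1 <;> decide

section Assembly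

variable (n : ℕ)

local notation "T" => rhoWord n
local notation "z" => (fun _ => (0:Fin 3) : Fin n → Fin 3)

/-- return times are closed under ℕ-linear operations -/
lemma ret_mul (b c : ℕ) (hb : T^[b] z = z) : T^[b * c] z = z := by
  induction c with
  | zero => simp
  | succ c ih =>
    rw [show b * (c+1) = b * c + b by ring, Function.iterate_add_apply, hb, ih]

lemma ret_sub (a b : ℕ) (hb : b ≤ a) (ha : T^[a] z = z) (hbz : T^[b] z = z) :
    T^[a - b] z = z := by
  have h := Function.iterate_add_apply T (a - b) b z
  rw [show a - b + b = a by omega, ha, hbz] at h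
  exact h.symm

lemma ret_mod (a b : ℕ) (ha : T^[a] z = z) (hb : T^[b] z = z) : T^[a % b] z = z := by
  have h1 : T^[b * (a / b)] z = z := ret_mul n b (a / b) hb
  have h2 : a % b = a - b * (a / b) := by
    have := Nat.mod_add_div a b
    omega
  rw [h2]
  exact ret_sub n a (b * (a / b)) (by have := Nat.mod_add_div a b; omega) ha h1

lemma ret_gcd : ∀ a, ∀ b, T^[a] z = z → T^[b] z = z → T^[Nat.gcd a b] z = z := by
  intro a
  induction a using Nat.strong_induction_on with
  | _ a ih =>
    intro b ha hb
    rcases Nat.eq_zero_or_pos a with h | h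
    · subst h; rw [Nat.gcd_zero_left]; exact hb
    · rw [Nat.gcd_rec]
      exact ih (b % a) (Nat.mod_lt _ h) a (ret_mod n b a hb ha) ha

lemma no_small_return (hn : 1 ≤ n) : ∀ q, 0 < q → q < 3^n → T^[q] z ≠ z := by
  intro q hq1 hq2 hret
  set d := Nat.gcd q (3^n) with hd
  have hdret : T^[d] z = z := ret_gcd n q (3^n) hret (orbit_period n)
  have hdq : d ∣ q := Nat.gcd_dvd_left _ _
  have hdp : d ∣ 3^n := Nat.gcd_dvd_right _ _
  have hdpos : 0 < d := Nat.gcd_pos_of_pos_left _ hq1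
  have hdlt : d < 3^n := lt_of_le_of_lt (Nat.le_of_dvd hq1 hdq) hq2
  obtain ⟨i, hi, hdi⟩ := (Nat.dvd_prime_pow Nat.prime_three).mp hdp
  have hin : i ≤ n - 1 := by
    by_contra hcon
    have : i = n := by omega
    rw [this] at hdi
    omega
  have hdvd : d ∣ 3^(n-1) := hdi ▸ pow_dvd_pow 3 hin
  obtain ⟨c, hc⟩ := hdvd
  have : T^[3^(n-1)] z = z := by rw [hc]; exact ret_mul n d c hdret
  exact orbit_nontriv n hn this

lemma orbit_inj (hn : 1 ≤ n) : Function.Injective (fun i : Fin (3^n) => T^[(i:ℕ)] z) := by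
  intro i₁ i₂ hcon
  simp only at hcon
  by_contra hne
  -- wlog via cases
  rcases Nat.lt_or_ge (i₁ : ℕ) (i₂ : ℕ) with hlt | hge
  · have h := congrArg (T^[3^n - (i₂:ℕ)]) hcon
    rw [← Function.iterate_add_apply, ← Function.iterate_add_apply,
      show 3^n - (i₂:ℕ) + (i₂:ℕ) = 3^n by have := i₂.isLt; omega, orbit_period] at h
    exact no_small_return n hn (3^n - (i₂:ℕ) + (i₁:ℕ))
      (by have := i₂.isLt; omega) (by have := i₂.isLt; omega) h
  · have hlt : (i₂ : ℕ) < (i₁ : ℕ) := by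
      rcases Nat.eq_or_lt_of_le hge with h | h
      · exact absurd (Fin.ext h.symm) hne
      · exact h
    have h := congrArg (T^[3^n - (i₁:ℕ)]) hcon.symm
    rw [← Function.iterate_add_apply, ← Function.iterate_add_apply,
      show 3^n - (i₁:ℕ) + (i₁:ℕ) = 3^n by have := i₁.isLt; omega, orbit_period] at h
    exact no_small_return n hn (3^n - (i₁:ℕ) + (i₂:ℕ))
      (by have := i₁.isLt; omega) (by have := i₁.isLt; omega) h

lemma orbit_surj (hn : 1 ≤ n) : ∀ x : Fin n → Fin 3, ∃ a : Fin (3^n), T^[(a:ℕ)] z = x := by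
  have hcard : Fintype.card (Fin (3^n)) = Fintype.card (Fin n → Fin 3) := by
    simp [Fintype.card_fun]
  have hbij : Function.Bijective (fun i : Fin (3^n) => T^[(i:ℕ)] z) :=
    (Fintype.bijective_iff_injective_and_card _).mpr ⟨orbit_inj n hn, hcard⟩
  intro x
  obtain ⟨a, ha⟩ := hbij.2 x
  exact ⟨a, ha⟩

end Assembly

end RhoAux

/-- For every `n ≥ 1`, the map `ρ : A^n → A^n` is a cyclic permutation of `A^n`
(a single cycle of length `3^n`): for every `x ∈ A^n` the orbit
`{ρ^i(x) : 0 ≤ i < 3^n}` is all of `A^n`. -/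
theorem rhoWord_cyclic (n : ℕ) (hn : 1 ≤ n) :
    ∀ x y : Fin n → Fin 3, ∃ i : ℕ, i < 3 ^ n ∧ (rhoWord n)^[i] x = y := by
  intro x y
  obtain ⟨a, ha⟩ := RhoAux.orbit_surj n hn x
  obtain ⟨b, hb⟩ := RhoAux.orbit_surj n hn y
  have ha3 := a.isLt
  have hb3 := b.isLt
  by_cases hab : (a : ℕ) ≤ (b : ℕ)
  · refine ⟨(b:ℕ) - (a:ℕ), by omega, ?_⟩
    rw [← ha, ← Function.iterate_add_apply, show (b:ℕ) - (a:ℕ) + (a:ℕ) = (b:ℕ) by omega, hb]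
  · refine ⟨(b:ℕ) + 3^n - (a:ℕ), by omega, ?_⟩
    rw [← ha, ← Function.iterate_add_apply,
      show (b:ℕ) + 3^n - (a:ℕ) + (a:ℕ) = (b:ℕ) + 3^n by omega,
      Function.iterate_add_apply, RhoAux.orbit_period, hb]
end

section
/- With the construction as in the context: for every fixed e ∈ B^ℕ, the map A^ℕ → A^ℕ sending c to the A-track of 𝓕(c,e), i.e. c ↦ π_A(𝓕(c,e)) where π_A is the projection onto the A-track, is a bijection of A^ℕ. -/
/-- The `2k`-fold direct product `zot_{2k}` of the cellular automaton `zot` acting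
coordinatewise on `A^ℕ` with `A = {0,1,2}^{2k}`. -/
def zot2k (k : ℕ) (c : ℕ → (Fin (2 * k) → Fin 3)) : ℕ → (Fin (2 * k) → Fin 3) :=
  fun i j => rho (c (i + 1) j) (c i j)

/-- The cellular automaton `𝓕` on `(A × B)^ℕ` with `A = {0,1,2}^{2k}`: it acts as `H` on
the `B`-track, and on the `A`-track it acts as `zot_{2k}` where the `B`-track is not
going to become `q`, and as the identity where it is. -/
def calF {B : Type*} [DecidableEq B] (k : ℕ) (H : (ℕ → B) → (ℕ → B)) (q : B)
    (ce : ℕ → (Fin (2 * k) → Fin 3) × B) : ℕ → (Fin (2 * k) → Fin 3) × B :=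
  fun i =>
    (if H (fun m => (ce m).2) i = q then (ce i).1
      else zot2k k (fun m => (ce m).1) i,
     H (fun m => (ce m).2) i)

/-- Inverse of `rho v ·`. -/
def rhoInv (v u : Fin 3) : Fin 3 := if v = 1 then ![2, 0, 1] u else ![0, 2, 1] u

/-- Radius-1 local inverse of `zot`. -/
def ginv (u v : Fin 3) : Fin 3 := if v = 2 then ![2, 0, 1] u else ![0, 2, 1] u

lemma key_A : ∀ v x : Fin 3, rhoInv v (rho v x) = x := by decide
lemma key_B : ∀ v u : Fin 3, rho v (rhoInv v u) = u := by decide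
lemma key_C : ∀ x y z : Fin 3, ginv (rho y x) (rho z y) = x := by decide
lemma key_D : ∀ u v w : Fin 3, rho (ginv v w) (ginv u v) = u := by decide
lemma key_E : ∀ u v w : Fin 3, rho (rhoInv w v) (ginv u v) = u := by decide

/-- With the construction as above (H a one-sided CA with radius-1 local rule `f` and
spreading quiescent state `q`, `k ≥ 1`): for every fixed `e ∈ B^ℕ` the map
`c ↦ π_A(𝓕(c,e))` (the `A`-track of `𝓕(c,e)`) is a bijection of `A^ℕ`. -/
theorem calF_A_track_bijective {B : Type*} [Fintype B] [DecidableEq B]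
    (H : (ℕ → B) → (ℕ → B)) (f : B → B → B)
    (hf : ∀ c i, H c i = f (c i) (c (i + 1)))
    (q : B) (hq : ∀ a b : B, a = q ∨ b = q → f a b = q)
    (k : ℕ) (hk : 1 ≤ k) :
    ∀ e : ℕ → B,
      Function.Bijective
        (fun (c : ℕ → (Fin (2 * k) → Fin 3)) =>
          fun i => (calF k H q (fun m => (c m, e m)) i).1) := by
  intro e
  rw [Function.bijective_iff_has_inverse]
  refine ⟨fun d i j =>
      if H e i = q then d i j
      else if H e (i + 1) = q then rhoInv (d (i + 1) j) (d i j)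
      else ginv (d i j) (d (i + 1) j), ?_, ?_⟩
  · -- left inverse
    intro c
    funext i j
    simp only [calF, zot2k]
    by_cases h1 : H e i = q
    · simp [h1]
    · by_cases h2 : H e (i + 1) = q
      · simp [zot2k, h1, h2, key_A]
      · simp [zot2k, h1, h2, key_C]
  · -- right inverse
    intro d
    funext i j
    simp only [calF, zot2k]
    by_cases h1 : H e i = q
    · simp [h1]
    · by_cases h2 : H e (i + 1) = q
      · simp [zot2k, h1, h2, key_B]
      · by_cases h3 : H e (i + 2) = q
        · simp [zot2k, h1, h2, show i + 1 + 1 = i + 2 from rfl, h3, key_E]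
        · simp [zot2k, h1, h2, show i + 1 + 1 = i + 2 from rfl, h3, key_D]
end

section
/- Let B₂ be a finite set and m ≥ 1. Define shift, shiftt : (B₂×B₂)^m → (B₂×B₂)^m on pairs of words (u, v) with u, v ∈ B₂^m by shift(u,v) = (u_1 u_2 ⋯ u_{m−1} u_0, v_1 v_2 ⋯ v_{m−1} v_0) and shiftt(u,v) = (u_1 u_2 ⋯ u_{m−1} v_0, v_1 v_2 ⋯ v_{m−1} u_0). For m = 2n define φ : (B₂×B₂)^{2n} → (B₂×B₂)^{2n} by φ(u_0 ⋯ u_{2n−1}, v_0 ⋯ v_{2n−1}) = (u_0 v_0 u_1 v_1 ⋯ u_{n−1} v_{n−1}, u_n v_n u_{n+1} v_{n+1} ⋯ u_{2n−1} v_{2n−1}). Then φ is a bijection and shift = φ^{−1} ∘ shiftt² ∘ φ on (B₂×B₂)^{2n}. -/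
section

variable {B₂ : Type*}

/-- `shift` on two parallel tracks of length `m`:
`shift(u,v) = (u_1 ⋯ u_{m−1} u_0, v_1 ⋯ v_{m−1} v_0)`. -/
def shiftW (m : ℕ) (p : (Fin m → B₂) × (Fin m → B₂)) : (Fin m → B₂) × (Fin m → B₂) :=
  (fun i => if h : (i : ℕ) + 1 < m then p.1 ⟨(i : ℕ) + 1, h⟩ else p.1 ⟨0, by omega⟩,
   fun i => if h : (i : ℕ) + 1 < m then p.2 ⟨(i : ℕ) + 1, h⟩ else p.2 ⟨0, by omega⟩)

/-- `shiftt` on two parallel tracks of length `m` (the Möbius variant):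
`shiftt(u,v) = (u_1 ⋯ u_{m−1} v_0, v_1 ⋯ v_{m−1} u_0)`. -/
def shifttW (m : ℕ) (p : (Fin m → B₂) × (Fin m → B₂)) : (Fin m → B₂) × (Fin m → B₂) :=
  (fun i => if h : (i : ℕ) + 1 < m then p.1 ⟨(i : ℕ) + 1, h⟩ else p.2 ⟨0, by omega⟩,
   fun i => if h : (i : ℕ) + 1 < m then p.2 ⟨(i : ℕ) + 1, h⟩ else p.1 ⟨0, by omega⟩)

/-- For `m = 2n`, the rearranging map
`φ(u_0 ⋯ u_{2n−1}, v_0 ⋯ v_{2n−1}) = (u_0 v_0 u_1 v_1 ⋯ u_{n−1} v_{n−1},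
u_n v_n u_{n+1} v_{n+1} ⋯ u_{2n−1} v_{2n−1})`. -/
def phiW (n : ℕ) (p : (Fin (2 * n) → B₂) × (Fin (2 * n) → B₂)) :
    (Fin (2 * n) → B₂) × (Fin (2 * n) → B₂) :=
  (fun i => if (i : ℕ) % 2 = 0
      then p.1 ⟨(i : ℕ) / 2, by have := i.isLt; omega⟩
      else p.2 ⟨(i : ℕ) / 2, by have := i.isLt; omega⟩,
   fun i => if (i : ℕ) % 2 = 0
      then p.1 ⟨n + (i : ℕ) / 2, by have := i.isLt; omega⟩
      else p.2 ⟨n + (i : ℕ) / 2, by have := i.isLt; omega⟩)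

end

/-! Read a pair of tracks `(u, v)` of length `m` as the single cyclic word `u v` of length `2m`
(`Fin.appendEquiv`). In this reading `shiftt` is the rotation by one letter, so `shiftt²` is the
rotation by two letters, and `φ(u, v)` is the interleaving `u₀ v₀ u₁ v₁ ⋯` of `u` and `v`.
Rotating an interleaving by two letters rotates each of `u` and `v` by one letter, which is
`shift`. Since `φ` is an interleaving followed by the inverse of the reading, it is a bijection. -/

theorem Fin.append_apply_eq_dite {α : Type*} {m n : ℕ} (u : Fin m → α) (v : Fin n → α)
    (k : Fin (m + n)) :
    Fin.append u v k = if h : (k : ℕ) < m then u ⟨k, h⟩ else v ⟨k - m, by omega⟩ := by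
  induction k using Fin.addCases with
  | left i => simp
  | right j => simp

theorem val_finRotate {m : ℕ} (i : Fin m) :
    (finRotate m i : ℕ) = if (i : ℕ) + 1 < m then (i : ℕ) + 1 else 0 := by
  cases m with
  | zero => exact i.elim0
  | succ m =>
    rw [coe_finRotate]
    simp only [Fin.ext_iff, Fin.val_last]
    split_ifs <;> omega

section

variable {α : Type*}

def interleaveEquiv (m : ℕ) : (Fin m → α) × (Fin m → α) ≃ (Fin (m + m) → α) where
  toFun p k := if (k : ℕ) % 2 = 0 then p.1 ⟨k / 2, by omega⟩ else p.2 ⟨k / 2, by omega⟩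
  invFun w := (fun i => w ⟨2 * i, by omega⟩, fun i => w ⟨2 * i + 1, by omega⟩)
  left_inv p := by ext i <;> simp [Nat.mul_add_div]
  right_inv w := by
    ext k
    dsimp only
    grind

theorem interleaveEquiv_comp_finRotate (m : ℕ) (p : (Fin m → α) × (Fin m → α)) :
    interleaveEquiv m (p.1 ∘ finRotate m, p.2 ∘ finRotate m) =
      interleaveEquiv m p ∘ finRotate (m + m) ∘ finRotate (m + m) := by
  ext k
  simp only [interleaveEquiv, Equiv.coe_fn_mk, Function.comp_apply]
  grind [val_finRotate]

theorem shiftW_eq_comp_finRotate (m : ℕ) (p : (Fin m → α) × (Fin m → α)) :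
    shiftW m p = (p.1 ∘ finRotate m, p.2 ∘ finRotate m) := by
  ext i <;> grind [shiftW, val_finRotate]

theorem appendEquiv_shifttW (m : ℕ) (q : (Fin m → α) × (Fin m → α)) :
    Fin.appendEquiv m m (shifttW m q) = Fin.appendEquiv m m q ∘ finRotate (m + m) := by
  ext k
  simp only [Fin.appendEquiv_apply, Function.comp_apply, Fin.append_apply_eq_dite, shifttW]
  grind [val_finRotate]

theorem appendEquiv_phiW (n : ℕ) (p : (Fin (2 * n) → α) × (Fin (2 * n) → α)) :
    Fin.appendEquiv (2 * n) (2 * n) (phiW n p) = interleaveEquiv (2 * n) p := by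
  ext k
  simp only [Fin.appendEquiv_apply, Fin.append_apply_eq_dite, phiW, interleaveEquiv,
    Equiv.coe_fn_mk]
  grind

theorem phiW_eq_appendEquiv_symm_comp (n : ℕ) :
    phiW (B₂ := α) n = (Fin.appendEquiv (2 * n) (2 * n)).symm ∘ interleaveEquiv (2 * n) :=
  funext fun p => (Equiv.eq_symm_apply _).2 (appendEquiv_phiW n p)

end

theorem phiW_conjugates_shift_to_shiftt_sq_general {B₂ : Type*}
    (n : ℕ) :
    Function.Bijective (phiW (B₂ := B₂) n) ∧
      ∀ p : (Fin (2 * n) → B₂) × (Fin (2 * n) → B₂),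
        phiW n (shiftW (2 * n) p) = shifttW (2 * n) (shifttW (2 * n) (phiW n p)) := by
  refine ⟨?_, fun p => (Fin.appendEquiv _ _).injective ?_⟩
  · rw [phiW_eq_appendEquiv_symm_comp]
    exact (Fin.appendEquiv _ _).symm.bijective.comp (interleaveEquiv _).bijective
  · rw [appendEquiv_shifttW, appendEquiv_shifttW, appendEquiv_phiW, appendEquiv_phiW,
      shiftW_eq_comp_finRotate, interleaveEquiv_comp_finRotate]
    rfl

/-- For a finite set `B₂` and `m = 2n ≥ 2`: `φ` is a bijection of `(B₂×B₂)^{2n}` and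
`shift = φ⁻¹ ∘ shiftt² ∘ φ`, i.e. `φ ∘ shift = shiftt² ∘ φ` on `(B₂×B₂)^{2n}`. -/
theorem phiW_conjugates_shift_to_shiftt_sq {B₂ : Type*} [Fintype B₂]
    (n : ℕ) (hn : 1 ≤ n) :
    Function.Bijective (phiW (B₂ := B₂) n) ∧
      ∀ p : (Fin (2 * n) → B₂) × (Fin (2 * n) → B₂),
        phiW n (shiftW (2 * n) p) = shifttW (2 * n) (shifttW (2 * n) (phiW n p)) :=
  phiW_conjugates_shift_to_shiftt_sq_general n
end
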